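/- arXiv:0710.3693 — 5 statements merged into one kernel-verified Lean document; each statement's English description precedes it below -/
import Mathlib

section
/- Let μ₋₍ₙ₋₁₎ < ⋯ < μ₀ = 0 < ⋯ < μₙ₋₁ be real numbers with μ₋ₖ = −μₖ. Then for any complex numbers c₁, …, cₙ with c₁ ∈ ℝ, there exists a unique real-valued function w in the span of {e^{iμₖ t} : −(n−1) ≤ k ≤ n−1} on [0,1] such that ∫₀¹ e^{iμ_{k−1} s} w(s) ds = cₖ for k = 1, …, n. -/
open Complex intervalIntegral

/-- Reindex a sum over `Finset.Icc (1-n) (n-1)` in `ℤ` by `Fin (2*n-1)`. -/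
lemma sum_Icc_fin {M : Type*} [AddCommMonoid M] (n : ℕ) (hn : 1 ≤ n) (g : ℤ → M) :
    ∑ k ∈ Finset.Icc (1 - (n : ℤ)) ((n : ℤ) - 1), g k
      = ∑ m : Fin (2 * n - 1), g (((m : ℕ) : ℤ) - ((n : ℤ) - 1)) := by
  refine (Finset.sum_bij' (fun (k : ℤ) (hk : k ∈ Finset.Icc (1 - (n:ℤ)) ((n:ℤ)-1)) =>
      (⟨(k + ((n:ℤ) - 1)).toNat, by
        simp only [Finset.mem_Icc] at hk; omega⟩ : Fin (2*n-1)))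
    (fun m _ => ((m : ℕ) : ℤ) - ((n : ℤ) - 1)) ?_ ?_ ?_ ?_ ?_)
  · intro a ha; exact Finset.mem_univ _
  · intro m _
    have := m.isLt
    simp only [Finset.mem_Icc]; omega
  · intro a ha
    simp only [Finset.mem_Icc] at ha
    simp only []; omega
  · intro m _
    have := m.isLt
    apply Fin.ext
    simp only []; omega
  · intro a ha
    simp only [Finset.mem_Icc] at ha
    congr 1
    simp only []; omega

/-- If a finite combination of exponentials with strictly increasing frequencies vanishes
on `(0,1]`, then all coefficients vanish. -/
lemma coeffs_eq_zero {N : ℕ} (ν : Fin N → ℝ) (hν : StrictMono ν) (d : Fin N → ℂ)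
    (hw : ∀ t ∈ Set.Ioc (0:ℝ) 1,
      ∑ m, d m * Complex.exp (Complex.I * (ν m : ℂ) * (t : ℂ)) = 0) :
    d = 0 := by
  rcases Nat.eq_zero_or_pos N with hN | hN
  · subst hN; funext m; exact m.elim0
  set R : ℝ := ν ⟨N - 1, by omega⟩ - ν ⟨0, hN⟩ with hR
  have hR0 : 0 ≤ R := sub_nonneg.2 (hν.monotone (by simp [Fin.le_def]))
  have hNR : (0:ℝ) < N + R := by
    have : (1:ℝ) ≤ N := by exact_mod_cast hN
    linarith
  set ε : ℝ := 1 / (N + R) with hε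
  have hε0 : 0 < ε := by positivity
  set x : Fin N → ℂ := fun k => Complex.exp (Complex.I * (ν k : ℂ) * (ε : ℂ)) with hx
  have hbound : ∀ j k : Fin N, j < k → (ν k - ν j) * ε < 2 * Real.pi := by
    intro j k hjk
    have h1 : ν j ≥ ν ⟨0, hN⟩ := hν.monotone (by simp [Fin.le_def])
    have h2 : ν k ≤ ν ⟨N - 1, by omega⟩ := hν.monotone (by
      simp only [Fin.le_def]; omega)
    have h3 : ν k - ν j ≤ R := by rw [hR]; linarith
    have h4 : (ν k - ν j) * ε ≤ R * ε :=
      mul_le_mul_of_nonneg_right h3 hε0.le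
    have h5 : R * ε < 1 := by
      rw [hε, mul_one_div, div_lt_one hNR]
      have : (1:ℝ) ≤ N := by exact_mod_cast hN
      linarith
    have : (1:ℝ) < 2 * Real.pi := by nlinarith [Real.pi_gt_three]
    linarith
  have hne : ∀ j k : Fin N, j < k → x j ≠ x k := by
    intro j k hjk heq
    rw [hx] at heq
    simp only at heq
    rw [Complex.exp_eq_exp_iff_exists_int] at heq
    obtain ⟨q, hq⟩ := heq
    have him : ν j * ε = ν k * ε + q * (2 * Real.pi) := by
      have := congrArg Complex.im hq
      simpa [Complex.mul_im, Complex.add_im, Complex.mul_re] using this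
    set m : ℤ := -q with hm
    have hE : (ν k - ν j) * ε = 2 * Real.pi * m := by
      push_cast [hm]; nlinarith [him]
    have hpos : (0:ℝ) < 2 * Real.pi * m := by
      rw [← hE]
      exact mul_pos (sub_pos.2 (hν hjk)) hε0
    have hm0 : (0:ℤ) < m := by
      by_contra h
      push_neg at h
      have : (m:ℝ) ≤ 0 := by exact_mod_cast h
      nlinarith [Real.pi_pos]
    have hm1 : (1:ℝ) ≤ (m:ℝ) := by exact_mod_cast hm0
    have := hbound j k hjk
    nlinarith [Real.pi_pos]
  have hsample : ∀ m : Fin N, ∑ k, (d k * x k) * x k ^ (m:ℕ) = 0 := by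
    intro m
    set t : ℝ := ((m:ℕ) + 1) * ε with ht
    have htmem : t ∈ Set.Ioc (0:ℝ) 1 := by
      constructor
      · positivity
      · have h1 : ((m:ℕ):ℝ) + 1 ≤ N := by exact_mod_cast Nat.succ_le_of_lt m.isLt
        have h2 : t ≤ N * ε := by
          rw [ht]
          exact mul_le_mul_of_nonneg_right h1 hε0.le
        have h3 : (N:ℝ) * ε ≤ 1 := by
          rw [hε, mul_one_div, div_le_one hNR]; linarith
        linarith
    have h0 := hw t htmem
    rw [← h0]
    apply Finset.sum_congr rfl
    intro k _
    have hxp : Complex.exp (Complex.I * (ν k : ℂ) * (t : ℂ)) = x k ^ ((m:ℕ) + 1) := by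
      rw [hx]
      rw [← Complex.exp_nat_mul]
      congr 1
      push_cast [ht]
      ring
    rw [hxp, pow_succ]
    ring
  set v : Fin N → ℂ := fun k => d k * x k with hv
  have hvec : Matrix.vecMul v (Matrix.vandermonde x) = 0 := by
    funext m
    simpa [Matrix.vecMul, dotProduct, Matrix.vandermonde] using hsample m
  have hdet : (Matrix.vandermonde x).det ≠ 0 := by
    rw [Matrix.det_vandermonde]
    apply Finset.prod_ne_zero_iff.2
    intro i _
    apply Finset.prod_ne_zero_iff.2
    intro j hj
    exact sub_ne_zero.2 (Ne.symm (hne i j (Finset.mem_Ioi.1 hj)))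
  have hunit : IsUnit (Matrix.vandermonde x) :=
    (Matrix.isUnit_iff_isUnit_det _).2 (isUnit_iff_ne_zero.2 hdet)
  have hv0 : v = 0 := by
    apply Matrix.vecMul_injective_iff_isUnit.2 hunit
    show Matrix.vecMul v (Matrix.vandermonde x) = Matrix.vecMul 0 (Matrix.vandermonde x)
    rw [hvec, Matrix.zero_vecMul]
  funext k
  have : d k * x k = 0 := congrFun hv0 k
  rcases mul_eq_zero.1 this with h | h
  · exact h
  · exact absurd h (Complex.exp_ne_zero _)

/-- The trigonometric moment problem in the space `Eₙ` of real-valued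
trigonometric polynomials with frequencies `μ₋₍ₙ₋₁₎ < ⋯ < μ₀ = 0 < ⋯ < μₙ₋₁`,
`μ₋ₖ = −μₖ`: for any `c₁, …, cₙ ∈ ℂ` with `c₁ ∈ ℝ` there is a unique real-valued
`w` in the span of the exponentials `e^{iμₖ t}` with
`∫₀¹ e^{iμ_{k−1} s} w(s) ds = cₖ` for `k = 1, …, n`. -/
theorem stmt_1 (n : ℕ) (hn : 1 ≤ n) (μ : ℤ → ℝ)
    (hmono : ∀ j k : ℤ, 1 - (n : ℤ) ≤ j → j < k → k ≤ (n : ℤ) - 1 → μ j < μ k)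
    (hμ0 : μ 0 = 0) (hsym : ∀ k : ℤ, μ (-k) = -μ k)
    (c : Fin n → ℂ) (hc : (c ⟨0, hn⟩).im = 0) :
    ∃! w : ℝ → ℂ,
      (∃ d : ℤ → ℂ, ∀ t : ℝ,
        w t = ∑ k ∈ Finset.Icc (1 - (n : ℤ)) ((n : ℤ) - 1),
          d k * Complex.exp (Complex.I * (μ k : ℂ) * (t : ℂ))) ∧
      (∀ t : ℝ, (w t).im = 0) ∧
      (∀ k : Fin n,
        ∫ s in (0:ℝ)..1, Complex.exp (Complex.I * (μ (k : ℤ) : ℂ) * (s : ℂ)) * w s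
          = c k) := by
  classical
  set ι : Fin (2*n-1) → ℤ := fun m => ((m:ℕ):ℤ) - ((n:ℤ) - 1) with hιdef
  set rev : Fin (2*n-1) → Fin (2*n-1) := fun m => ⟨2*n-1-1-(m:ℕ), by omega⟩ with hrevdef
  set ν : Fin (2*n-1) → ℝ := fun m => μ (ι m) with hνdef
  set e : Fin (2*n-1) → ℝ → ℂ :=
    fun m s => Complex.exp (Complex.I * (ν m : ℂ) * (s : ℂ)) with hedef
  have hι_rev : ∀ m, ι (rev m) = -(ι m) := by
    intro m
    have := m.isLt
    simp only [hιdef, hrevdef]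
    omega
  have hrev_inv : ∀ m, rev (rev m) = m := by
    intro m
    have := m.isLt
    apply Fin.ext
    simp only [hrevdef]
    omega
  have hrev_bij : Function.Bijective rev :=
    Function.Involutive.bijective hrev_inv
  have hν_rev : ∀ m, ν (rev m) = -ν m := by
    intro m
    simp only [hνdef]
    rw [hι_rev, hsym]
  have hmono' : StrictMono ν := by
    intro j k hjk
    have hj := j.isLt
    have hk := k.isLt
    have hjk' : (j:ℕ) < (k:ℕ) := hjk
    apply hmono (ι j) (ι k) <;> simp only [hιdef] <;> omega
  have hcont : ∀ m, Continuous (e m) := by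
    intro m
    simp only [hedef]
    exact Complex.continuous_exp.comp (continuous_const.mul Complex.continuous_ofReal)
  set A : Matrix (Fin (2*n-1)) (Fin (2*n-1)) ℂ :=
    fun j k => ∫ s in (0:ℝ)..1, e j s * e k s with hAdef
  -- swap sum and integral
  have hswap : ∀ (d : Fin (2*n-1) → ℂ) (j : Fin (2*n-1)),
      ∫ s in (0:ℝ)..1, e j s * (∑ m, d m * e m s) = A.mulVec d j := by
    intro d j
    have h1 : ∀ s : ℝ, e j s * (∑ m, d m * e m s) = ∑ m, d m * (e j s * e m s) := by
      intro s
      rw [Finset.mul_sum]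
      exact Finset.sum_congr rfl (fun m _ => by ring)
    simp_rw [h1]
    rw [intervalIntegral.integral_finset_sum (f := fun m s => d m * (e j s * e m s)) (fun m _ =>
      (continuous_const.mul ((hcont j).mul (hcont m))).intervalIntegrable 0 1)]
    simp_rw [intervalIntegral.integral_const_mul]
    simp only [Matrix.mulVec, dotProduct, hAdef]
    exact Finset.sum_congr rfl (fun m _ => mul_comm _ _)
  -- conj of exponentials
  have hconj_e : ∀ (m : Fin (2*n-1)) (s : ℝ), (starRingEnd ℂ) (e m s) = e (rev m) s := by
    intro m s
    simp only [hedef]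
    rw [← Complex.exp_conj, hν_rev m]
    congr 1
    simp only [map_mul, Complex.conj_I, Complex.conj_ofReal]
    push_cast
    ring
  -- conj of interval integrals over [0,1]
  have hconj_int : ∀ f : ℝ → ℂ,
      (∫ s in (0:ℝ)..1, (starRingEnd ℂ) (f s)) = (starRingEnd ℂ) (∫ s in (0:ℝ)..1, f s) := by
    intro f
    rw [intervalIntegral.integral_of_le (by norm_num : (0:ℝ) ≤ 1),
      intervalIntegral.integral_of_le (by norm_num : (0:ℝ) ≤ 1)]
    exact integral_conj
  -- kernel property of A
  have hker : ∀ d : Fin (2*n-1) → ℂ,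
      (∀ j, ∫ s in (0:ℝ)..1, e j s * (∑ m, d m * e m s) = 0) → d = 0 := by
    intro d hmom
    set w : ℝ → ℂ := fun t => ∑ m, d m * e m t with hwdef
    have hwc : Continuous w := by
      simp only [hwdef]
      exact continuous_finset_sum _ (fun m _ => continuous_const.mul (hcont m))
    have hcw : ∀ s, (starRingEnd ℂ) (w s) = ∑ m, (starRingEnd ℂ) (d m) * e (rev m) s := by
      intro s
      simp only [hwdef, map_sum, map_mul, hconj_e]
    have hzero : ∫ s in (0:ℝ)..1, (starRingEnd ℂ) (w s) * w s = 0 := by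
      have h1 : ∀ s : ℝ, (starRingEnd ℂ) (w s) * w s
          = ∑ m, (starRingEnd ℂ) (d m) * (e (rev m) s * w s) := by
        intro s
        rw [hcw, Finset.sum_mul]
        exact Finset.sum_congr rfl (fun m _ => by ring)
      simp_rw [h1]
      rw [intervalIntegral.integral_finset_sum (f := fun m s => (starRingEnd ℂ) (d m) * (e (rev m) s * w s)) (fun m _ =>
        (continuous_const.mul ((hcont (rev m)).mul hwc)).intervalIntegrable 0 1)]
      refine Finset.sum_eq_zero fun m _ => ?_
      rw [intervalIntegral.integral_const_mul, hmom (rev m), mul_zero]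
    have hnsq : ∫ s in (0:ℝ)..1, Complex.normSq (w s) = 0 := by
      have h2 : ∀ s : ℝ, (starRingEnd ℂ) (w s) * w s = ((Complex.normSq (w s) : ℝ) : ℂ) := by
        intro s
        rw [mul_comm, Complex.mul_conj]
      simp_rw [h2] at hzero
      rwa [intervalIntegral.integral_ofReal, Complex.ofReal_eq_zero] at hzero
    have hcontsq : Continuous fun s => Complex.normSq (w s) :=
      Complex.continuous_normSq.comp hwc
    have hae := (intervalIntegral.integral_eq_zero_iff_of_le_of_nonneg_ae
      (by norm_num : (0:ℝ) ≤ 1)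
      (Filter.Eventually.of_forall (fun s => Complex.normSq_nonneg (w s)))
      (hcontsq.intervalIntegrable 0 1)).1 hnsq
    have heq : Set.EqOn (fun s => Complex.normSq (w s)) 0 (Set.Ioc (0:ℝ) 1) := by
      apply MeasureTheory.Measure.eqOn_of_ae_eq hae hcontsq.continuousOn continuousOn_const
      rw [interior_Ioc, closure_Ioo (by norm_num : (0:ℝ) ≠ 1)]
      exact Set.Ioc_subset_Icc_self
    have hwzero : ∀ t ∈ Set.Ioc (0:ℝ) 1, w t = 0 := fun t ht =>
      Complex.normSq_eq_zero.1 (heq ht)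
    apply coeffs_eq_zero ν hmono' d
    intro t ht
    have := hwzero t ht
    simpa only [hwdef, hedef] using this
  -- A is invertible
  have hker' : ∀ d : Fin (2*n-1) → ℂ, A.mulVec d = 0 → d = 0 := by
    intro d hd
    apply hker d
    intro j
    rw [hswap d j, hd]
    rfl
  have hAinj : Function.Injective A.mulVec := by
    intro a b hab
    have : A.mulVec (a - b) = 0 := by
      rw [Matrix.mulVec_sub, hab, sub_self]
    have := hker' _ this
    exact sub_eq_zero.1 this
  have hAunit : IsUnit A := Matrix.mulVec_injective_iff_isUnit.1 hAinj
  have hAsurj : Function.Surjective A.mulVec :=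
    Matrix.mulVec_surjective_iff_isUnit.2 hAunit
  -- index embedding Fin n → Fin (2n-1)
  set jdx : Fin n → Fin (2*n-1) := fun k => ⟨(k:ℕ) + (n-1), by have := k.isLt; omega⟩
    with hjdxdef
  have hι_jdx : ∀ k : Fin n, ι (jdx k) = ((k:ℕ):ℤ) := by
    intro k
    have := k.isLt
    simp only [hιdef, hjdxdef]
    omega
  -- extended target vector
  set ctil : Fin (2*n-1) → ℂ := fun j =>
    if h : (0:ℤ) ≤ ι j then
      c ⟨(ι j).toNat, by have := j.isLt; simp only [hιdef] at h ⊢; omega⟩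
    else (starRingEnd ℂ) (c ⟨(-ι j).toNat, by have := j.isLt; simp only [hιdef] at h ⊢; omega⟩)
    with hctildef
  have hctil_pos : ∀ (j : Fin (2*n-1)) (k : Fin n), ι j = ((k:ℕ):ℤ) → ctil j = c k := by
    intro j k hjk
    have h0 : (0:ℤ) ≤ ι j := by rw [hjk]; positivity
    simp only [hctildef]
    rw [dif_pos h0]
    congr 1
    apply Fin.ext
    simp only [hjk]
    omega
  have hctil_rev : ∀ j, (starRingEnd ℂ) (ctil (rev j)) = ctil j := by
    intro j
    have hιr := hι_rev j
    rcases lt_trichotomy (ι j) 0 with h | h | h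
    · have h1 : (0:ℤ) ≤ ι (rev j) := by omega
      have h2 : ¬ (0:ℤ) ≤ ι j := by omega
      simp only [hctildef]
      rw [dif_pos h1, dif_neg h2]
      exact congrArg (starRingEnd ℂ) (congrArg c (Fin.ext
        (show (ι (rev j)).toNat = (-ι j).toNat by omega)))
    · have h1 : (0:ℤ) ≤ ι (rev j) := by omega
      have h2 : (0:ℤ) ≤ ι j := by omega
      have h0 : ι j = (((⟨0, hn⟩ : Fin n) : ℕ) : ℤ) := by
        show ι j = ((0:ℕ):ℤ); omega
      have h0r : ι (rev j) = (((⟨0, hn⟩ : Fin n) : ℕ) : ℤ) := by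
        show ι (rev j) = ((0:ℕ):ℤ); omega
      rw [hctil_pos (rev j) ⟨0, hn⟩ h0r, hctil_pos j ⟨0, hn⟩ h0]
      exact Complex.conj_eq_iff_im.2 hc
    · have h1 : ¬ (0:ℤ) ≤ ι (rev j) := by omega
      have h2 : (0:ℤ) ≤ ι j := by omega
      simp only [hctildef]
      rw [dif_neg h1, dif_pos h2, Complex.conj_conj]
      exact congrArg c (Fin.ext (show (-ι (rev j)).toNat = (ι j).toNat by omega))
  -- solve the linear system
  obtain ⟨d, hd⟩ := hAsurj ctil
  have hdmom : ∀ j, ∫ s in (0:ℝ)..1, e j s * (∑ m, d m * e m s) = ctil j := by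
    intro j
    rw [hswap d j, hd]
  -- symmetry of the coefficients
  have hcA : ∀ j k, (starRingEnd ℂ) (A j k) = A (rev j) (rev k) := by
    intro j k
    simp only [hAdef]
    rw [← hconj_int]
    congr 1
    funext s
    rw [map_mul, hconj_e, hconj_e]
  have hdsym : ∀ m, (starRingEnd ℂ) (d m) = d (rev m) := by
    have hd2 : A.mulVec (fun m => (starRingEnd ℂ) (d (rev m))) = ctil := by
      funext j
      have step1 : (A.mulVec fun m => (starRingEnd ℂ) (d (rev m))) j
          = ∑ k, A j k * (starRingEnd ℂ) (d (rev k)) := by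
        simp [Matrix.mulVec, dotProduct]
      have step2 : ∑ k, A j k * (starRingEnd ℂ) (d (rev k))
          = (starRingEnd ℂ) (∑ k, A (rev j) (rev k) * d (rev k)) := by
        rw [map_sum]
        refine Finset.sum_congr rfl fun k _ => ?_
        rw [map_mul, hcA, hrev_inv, hrev_inv]
      have step3 : ∑ k, A (rev j) (rev k) * d (rev k) = ∑ k, A (rev j) k * d k :=
        Function.Bijective.sum_comp hrev_bij (fun k => A (rev j) k * d k)
      have step4 : (A.mulVec d) (rev j) = ∑ k, A (rev j) k * d k := by
        simp [Matrix.mulVec, dotProduct]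
      rw [step1, step2, step3, ← step4, hd, hctil_rev]
    have hdd := hAinj (hd2.trans hd.symm)
    intro m
    calc (starRingEnd ℂ) (d m) = (starRingEnd ℂ) (d (rev (rev m))) := by rw [hrev_inv]
      _ = d (rev m) := congrFun hdd (rev m)
  -- the solution function
  set w : ℝ → ℂ := fun t => ∑ m, d m * e m t with hwdef
  have hwc : Continuous w := by
    simp only [hwdef]
    exact continuous_finset_sum _ (fun m _ => continuous_const.mul (hcont m))
  have hwreal : ∀ t : ℝ, (w t).im = 0 := by
    intro t
    rw [← Complex.conj_eq_iff_im]
    calc (starRingEnd ℂ) (w t) = ∑ m, (starRingEnd ℂ) (d m) * e (rev m) t := by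
          simp only [hwdef, map_sum, map_mul, hconj_e]
      _ = ∑ m, d (rev m) * e (rev m) t := by
          exact Finset.sum_congr rfl fun m _ => by rw [hdsym]
      _ = ∑ m, d m * e m t :=
          Function.Bijective.sum_comp hrev_bij (fun m => d m * e m t)
      _ = w t := by rw [hwdef]
  -- the representation over Icc
  have hwrep : ∀ (dd : Fin (2*n-1) → ℂ) (t : ℝ),
      (∑ k ∈ Finset.Icc (1 - (n : ℤ)) ((n : ℤ) - 1),
        (fun k : ℤ => if h : k ∈ Finset.Icc (1 - (n : ℤ)) ((n : ℤ) - 1) then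
            dd ⟨(k + ((n:ℤ)-1)).toNat, by simp only [Finset.mem_Icc] at h; omega⟩
          else 0) k * Complex.exp (Complex.I * (μ k : ℂ) * (t : ℂ)))
      = ∑ m, dd m * e m t := by
    intro dd t
    rw [sum_Icc_fin n hn]
    refine Finset.sum_congr rfl fun m _ => ?_
    have hm := m.isLt
    have hmem : (((m:ℕ):ℤ) - ((n:ℤ)-1)) ∈ Finset.Icc (1 - (n:ℤ)) ((n:ℤ)-1) := by
      simp only [Finset.mem_Icc]; omega
    simp only [dif_pos hmem, hedef, hνdef, hιdef]
    congr 2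
    apply Fin.ext
    simp only []
    omega
  -- moments of w
  have hwmom : ∀ k : Fin n,
      ∫ s in (0:ℝ)..1, Complex.exp (Complex.I * (μ ((k:ℕ):ℤ) : ℂ) * (s : ℂ)) * w s = c k := by
    intro k
    calc ∫ s in (0:ℝ)..1, Complex.exp (Complex.I * (μ ((k:ℕ):ℤ) : ℂ) * (s : ℂ)) * w s
        = ∫ s in (0:ℝ)..1, e (jdx k) s * (∑ m, d m * e m s) := by
          congr 1
          funext s
          simp only [hwdef, hedef, hνdef, hι_jdx k]
      _ = ctil (jdx k) := hdmom (jdx k)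
      _ = c k := hctil_pos (jdx k) k (hι_jdx k)
  -- general moment identity for any solution
  have hallmom : ∀ u : ℝ → ℂ, Continuous u → (∀ t, (u t).im = 0) →
      (∀ k : Fin n,
        ∫ s in (0:ℝ)..1, Complex.exp (Complex.I * (μ ((k:ℕ):ℤ) : ℂ) * (s : ℂ)) * u s = c k) →
      ∀ j, ∫ s in (0:ℝ)..1, e j s * u s = ctil j := by
    intro u hu hureal humom
    have hpos : ∀ j : Fin (2*n-1), (0:ℤ) ≤ ι j → ∫ s in (0:ℝ)..1, e j s * u s = ctil j := by
      intro j hj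
      have hjlt : (ι j).toNat < n := by
        have := j.isLt
        simp only [hιdef] at hj ⊢
        omega
      obtain ⟨k, hιk⟩ : ∃ k : Fin n, ι j = ((k:ℕ):ℤ) :=
        ⟨⟨(ι j).toNat, hjlt⟩, by show ι j = (((ι j).toNat : ℕ) : ℤ); omega⟩
      calc ∫ s in (0:ℝ)..1, e j s * u s
          = ∫ s in (0:ℝ)..1, Complex.exp (Complex.I * (μ ((k:ℕ):ℤ) : ℂ) * (s : ℂ)) * u s := by
            congr 1
            funext s
            simp only [hedef, hνdef, hιk]
        _ = c k := humom k
        _ = ctil j := (hctil_pos j k hιk).symm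
    intro j
    rcases le_or_gt 0 (ι j) with hj | hj
    · exact hpos j hj
    · have hjr : (0:ℤ) ≤ ι (rev j) := by rw [hι_rev]; omega
      have hcu : ∀ s, (starRingEnd ℂ) (u s) = u s := fun s =>
        Complex.conj_eq_iff_im.2 (hureal s)
      calc ∫ s in (0:ℝ)..1, e j s * u s
          = ∫ s in (0:ℝ)..1, (starRingEnd ℂ) (e (rev j) s * u s) := by
            congr 1
            funext s
            rw [map_mul, hconj_e, hrev_inv, hcu]
        _ = (starRingEnd ℂ) (∫ s in (0:ℝ)..1, e (rev j) s * u s) := hconj_int _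
        _ = (starRingEnd ℂ) (ctil (rev j)) := by rw [hpos (rev j) hjr]
        _ = ctil j := hctil_rev j
  -- assemble
  refine ⟨w, ⟨⟨fun k : ℤ => if h : k ∈ Finset.Icc (1 - (n : ℤ)) ((n : ℤ) - 1) then
      d ⟨(k + ((n:ℤ)-1)).toNat, by simp only [Finset.mem_Icc] at h; omega⟩
    else 0, fun t => (hwrep d t).symm⟩, hwreal, fun k => hwmom k⟩, ?_⟩
  -- uniqueness
  rintro w' ⟨⟨dZ', hw'rep⟩, hw'real, hw'mom⟩
  set d' : Fin (2*n-1) → ℂ := fun m => dZ' (ι m) with hd'def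
  have hw'fin : ∀ t, w' t = ∑ m, d' m * e m t := by
    intro t
    rw [hw'rep t, sum_Icc_fin n hn]
  have hw'c : Continuous w' := by
    have : w' = fun t => ∑ m, d' m * e m t := funext hw'fin
    rw [this]
    exact continuous_finset_sum _ (fun m _ => continuous_const.mul (hcont m))
  have hw'mom' : ∀ j, ∫ s in (0:ℝ)..1, e j s * w' s = ctil j :=
    hallmom w' hw'c hw'real hw'mom
  have hwmom' : ∀ j, ∫ s in (0:ℝ)..1, e j s * w s = ctil j :=
    hallmom w hwc hwreal hwmom
  have hdiff : d' - d = 0 := by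
    apply hker
    intro j
    have h1 : ∀ s : ℝ, e j s * (∑ m, (d' - d) m * e m s) = e j s * w' s - e j s * w s := by
      intro s
      have : ∑ m, (d' - d) m * e m s = w' s - w s := by
        rw [hw'fin s, hwdef]
        simp only [Pi.sub_apply, sub_mul, Finset.sum_sub_distrib]
      rw [this]
      ring
    simp_rw [h1]
    rw [intervalIntegral.integral_sub (f := fun s => e j s * w' s) (g := fun s => e j s * w s) (((hcont j).mul hw'c).intervalIntegrable 0 1)
      (((hcont j).mul hwc).intervalIntegrable 0 1)]
    rw [hw'mom' j, hwmom' j, sub_self]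
  funext t
  rw [hw'fin t, hwdef]
  refine Finset.sum_congr rfl fun m _ => ?_
  have : d' m = d m := by
    have := congrFun hdiff m
    simpa [sub_eq_zero] using this
  rw [this]
end

section
/- Let Λ and B be Hermitian n×n matrices, e₁ a unit eigenvector of Λ with eigenvalue λ₁, and suppose ⟨Be₁, e₁⟩ ≠ 0 and the eigenvalues λ₁ < λ₂ < ⋯ < λₙ of Λ are distinct. Then the map γ ↦ det(Λ + γB − λ₁ I) is a polynomial in γ whose first-order coefficient equals ⟨Be₁, e₁⟩ (λ₂ − λ₁)⋯(λₙ − λ₁), which is nonzero. Consequently, for every η > 0 there exists γ with |γ| < η such that λ₁ is not an eigenvalue of Λ + γB. -/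
open Complex Matrix

/-- For Hermitian `Λ`, `B` with orthonormal eigenbasis `e` of `Λ`, distinct
eigenvalues `λ₀ < λ₁ < ⋯`, and `⟨Be₁,e₁⟩ ≠ 0`, the polynomial
`γ ↦ det(Λ + γB − λ₁ I)` has first-order coefficient
`⟨Be₁,e₁⟩ (λ₂ − λ₁)⋯(λₙ − λ₁) ≠ 0`; consequently arbitrarily small `γ` exist
for which `λ₁` is not an eigenvalue of `Λ + γB`. -/
theorem stmt_4 {n : ℕ} (Λ B : Matrix (Fin (n + 1)) (Fin (n + 1)) ℂ)
    (hΛ : Λ.IsHermitian) (hB : B.IsHermitian)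
    (e : Fin (n + 1) → EuclideanSpace ℂ (Fin (n + 1)))
    (he : Orthonormal ℂ e)
    (lam : Fin (n + 1) → ℝ) (hlam : StrictMono lam)
    (hev : ∀ j, Matrix.toEuclideanLin Λ (e j) = ((lam j : ℂ)) • e j)
    (hB11 : (inner ℂ (e 0) (Matrix.toEuclideanLin B (e 0)) : ℂ) ≠ 0) :
    (∃ P : Polynomial ℂ,
      (∀ γ : ℂ, P.eval γ = (Λ + γ • B - (lam 0 : ℂ) • (1 : Matrix (Fin (n + 1)) (Fin (n + 1)) ℂ)).det) ∧
      P.coeff 1 = (inner ℂ (e 0) (Matrix.toEuclideanLin B (e 0)) : ℂ) *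
        ∏ j : Fin n, ((lam j.succ : ℂ) - (lam 0 : ℂ)) ∧
      P.coeff 1 ≠ 0) ∧
    (∀ η : ℝ, 0 < η → ∃ γ : ℝ, |γ| < η ∧
      (Λ + (γ : ℂ) • B - (lam 0 : ℂ) • (1 : Matrix (Fin (n + 1)) (Fin (n + 1)) ℂ)).det ≠ 0) := by
  classical
  -- the unitary change-of-basis matrix whose columns are the `e j`
  set U : Matrix (Fin (n+1)) (Fin (n+1)) ℂ := Matrix.of fun i j => e j i with hUdef
  have horth : ∀ i j, (∑ k, (starRingEnd ℂ) (e i k) * e j k) = if i = j then 1 else 0 := by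
    intro i j
    have := (orthonormal_iff_ite.mp he) i j
    simpa [PiLp.inner_apply, mul_comm] using this
  have hUU : Uᴴ * U = 1 := by
    ext i j
    simp only [Matrix.mul_apply, Matrix.conjTranspose_apply, hUdef, Matrix.of_apply,
      Matrix.one_apply]
    simpa using horth i j
  have hUU' : U * Uᴴ = 1 := mul_eq_one_comm.mp hUU
  set B' : Matrix (Fin (n+1)) (Fin (n+1)) ℂ := Uᴴ * B * U with hB'def
  have hB'00 : B' 0 0 = (inner ℂ (e 0) (Matrix.toEuclideanLin B (e 0)) : ℂ) := by
    simp only [hB'def, Matrix.mul_apply, Matrix.conjTranspose_apply, hUdef, Matrix.of_apply]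
    simp [PiLp.inner_apply, Matrix.toEuclideanLin_apply, Matrix.mulVec, dotProduct,
      Finset.mul_sum, Finset.sum_mul, mul_assoc, mul_comm, mul_left_comm]
    rw [Finset.sum_comm]
  -- eigenvector relation in matrix form
  have hmv : ∀ j i, Λ.mulVec (e j) i = (lam j : ℂ) * e j i := by
    intro j i
    have h := congrArg (fun v : EuclideanSpace ℂ (Fin (n+1)) => v i) (hev j)
    simpa [Matrix.toEuclideanLin_apply] using h
  have hΛU : Λ * U = U * Matrix.diagonal (fun j => (lam j : ℂ)) := by
    ext i j
    simp only [Matrix.mul_apply, hUdef, Matrix.of_apply, Matrix.diagonal_apply]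
    rw [show (∑ k, Λ i k * e j k) = Λ.mulVec (e j) i from rfl, hmv j i]
    simp [mul_comm]
  set d : Fin (n+1) → ℂ := fun j => (lam j : ℂ) - (lam 0 : ℂ) with hddef
  set D : Matrix (Fin (n+1)) (Fin (n+1)) ℂ := Matrix.diagonal d with hDdef
  have hd0 : d 0 = 0 := by simp [hddef]
  -- conjugation identity
  have hconj : ∀ γ : ℂ,
      Uᴴ * (Λ + γ • B - (lam 0 : ℂ) • 1) * U = D + γ • B' := by
    intro γ
    have h1 : Uᴴ * Λ * U = Matrix.diagonal (fun j => (lam j : ℂ)) := by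
      rw [Matrix.mul_assoc, hΛU, ← Matrix.mul_assoc, hUU, Matrix.one_mul]
    have hD : D = Matrix.diagonal (fun j => (lam j : ℂ)) - (lam 0 : ℂ) • 1 := by
      ext i j
      by_cases h : i = j <;>
        simp [hDdef, hddef, Matrix.diagonal_apply, Matrix.one_apply, h, Matrix.sub_apply]
    rw [hD]
    rw [Matrix.mul_sub, Matrix.sub_mul, Matrix.mul_add, Matrix.add_mul, h1]
    rw [Matrix.mul_smul, Matrix.smul_mul, Matrix.mul_smul, Matrix.smul_mul, Matrix.mul_one, hUU]
    rw [hB'def]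
    abel
  have hdet : ∀ γ : ℂ,
      (Λ + γ • B - (lam 0 : ℂ) • 1).det = (D + γ • B').det := by
    intro γ
    have := congrArg Matrix.det (hconj γ)
    rw [Matrix.det_mul, Matrix.det_mul] at this
    have hdu : Uᴴ.det * U.det = 1 := by
      rw [← Matrix.det_mul, hUU, Matrix.det_one]
    calc (Λ + γ • B - (lam 0 : ℂ) • 1).det
        = (Uᴴ.det * U.det) * (Λ + γ • B - (lam 0 : ℂ) • 1).det := by rw [hdu, one_mul]
      _ = (D + γ • B').det := by rw [← this]; ring
  -- the polynomial
  set M : Matrix (Fin (n+1)) (Fin (n+1)) (Polynomial ℂ) :=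
    D.map Polynomial.C + (Polynomial.X : Polynomial ℂ) • B'.map Polynomial.C with hMdef
  set P : Polynomial ℂ := M.det with hPdef
  have hPeval : ∀ γ : ℂ, P.eval γ = (D + γ • B').det := by
    intro γ
    have : (Polynomial.evalRingHom γ).mapMatrix M = D + γ • B' := by
      ext i j
      simp [hMdef, Matrix.add_apply, Matrix.smul_apply, smul_eq_mul]
      ring
    rw [hPdef, ← this, ← RingHom.map_det]
    rfl
  -- coefficient computation
  set N : Matrix (Fin (n+1)) (Fin (n+1)) ℂ := D.updateCol 0 (fun i => B' i 0) with hNdef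
  have hdetN : N.det = B' 0 0 * ∏ j : Fin n, d j.succ := by
    rw [Matrix.det_apply]
    rw [Finset.sum_eq_single (1 : Equiv.Perm (Fin (n+1)))]
    · simp only [Equiv.Perm.sign_one, one_smul, Equiv.Perm.one_apply]
      rw [Fin.prod_univ_succ]
      simp [hNdef, Matrix.updateCol_apply, hDdef, Fin.succ_ne_zero]
    · intro σ _ hσ
      have : ∃ j : Fin (n+1), j ≠ 0 ∧ σ j ≠ j := by
        by_contra hcon
        push_neg at hcon
        apply hσ
        have h0 : σ 0 = 0 := by
          by_contra h0
          exact h0 (σ.injective (hcon (σ 0) h0))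
        ext x
        by_cases hx : x = 0
        · simp [hx, h0]
        · simp [hcon x hx]
      obtain ⟨j, hj0, hjσ⟩ := this
      have hz : N (σ j) j = 0 := by
        simp [hNdef, Matrix.updateCol_apply, hj0, hDdef, Matrix.diagonal_apply, hjσ]
      have hprod : (∏ i, N (σ i) i) = 0 := Finset.prod_eq_zero (Finset.mem_univ j) hz
      rw [hprod, smul_zero]
    · intro h; exact absurd (Finset.mem_univ _) h
  have hcol : ∀ i, M i 0 = Polynomial.X * Polynomial.C (B' i 0) := by
    intro i
    by_cases h : i = 0
    · simp [hMdef, h, hDdef, Matrix.diagonal_apply, hd0]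
    · simp [hMdef, hDdef, Matrix.diagonal_apply, h]
  have hMupd : M = M.updateCol 0
      ((Polynomial.X : Polynomial ℂ) • fun i => Polynomial.C (B' i 0)) := by
    ext i j
    by_cases h : j = 0
    · subst h
      rw [Matrix.updateCol_apply]
      simp [hcol i]
    · rw [Matrix.updateCol_apply]
      simp [h]
  have hPfact : P = Polynomial.X *
      (M.updateCol 0 (fun i => Polynomial.C (B' i 0))).det := by
    rw [hPdef]
    conv_lhs => rw [hMupd]
    rw [Matrix.det_updateCol_smul]
  set Q : Polynomial ℂ := (M.updateCol 0 (fun i => Polynomial.C (B' i 0))).det with hQdef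
  have hQ0 : Q.eval 0 = N.det := by
    have : (Polynomial.evalRingHom (0:ℂ)).mapMatrix
        (M.updateCol 0 (fun i => Polynomial.C (B' i 0))) = N := by
      ext i j
      by_cases h : j = 0
      · subst h; simp [Matrix.updateCol_apply, hNdef]
      · simp [Matrix.updateCol_apply, h, hNdef, hMdef]
    rw [hQdef, ← this, ← RingHom.map_det]
    rfl
  have hcoeff : P.coeff 1 = B' 0 0 * ∏ j : Fin n, d j.succ := by
    rw [hPfact]
    have : (Polynomial.X * Q).coeff (0 + 1) = Q.coeff 0 := Polynomial.coeff_X_mul Q 0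
    rw [show (1:ℕ) = 0 + 1 from rfl] at *
    rw [this, Polynomial.coeff_zero_eq_eval_zero, hQ0, hdetN]
  have hprod_ne : (∏ j : Fin n, d j.succ) ≠ 0 := by
    apply Finset.prod_ne_zero_iff.mpr
    intro j _
    simp only [hddef, sub_ne_zero]
    exact_mod_cast ne_of_gt (hlam (Fin.succ_pos j))
  have hc1 : P.coeff 1 = (inner ℂ (e 0) (Matrix.toEuclideanLin B (e 0)) : ℂ) *
      ∏ j : Fin n, ((lam j.succ : ℂ) - (lam 0 : ℂ)) := by
    rw [hcoeff, hB'00]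
  have hc1ne : P.coeff 1 ≠ 0 := by
    rw [hc1]
    exact mul_ne_zero hB11 hprod_ne
  have hPev : ∀ γ : ℂ, P.eval γ =
      (Λ + γ • B - (lam 0 : ℂ) • (1 : Matrix (Fin (n + 1)) (Fin (n + 1)) ℂ)).det := by
    intro γ
    rw [hPeval γ, hdet γ]
  refine ⟨⟨P, hPev, hc1, hc1ne⟩, ?_⟩
  intro η hη
  by_contra hcon
  push_neg at hcon
  have hPne : P ≠ 0 := fun h => hc1ne (by rw [h, Polynomial.coeff_zero])
  have hfin : Set.Finite {x : ℂ | P.IsRoot x} := Polynomial.finite_setOf_isRoot hPne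
  have hsub : ((fun γ : ℝ => (γ : ℂ)) '' Set.Ioo 0 η) ⊆ {x : ℂ | P.IsRoot x} := by
    rintro _ ⟨γ, ⟨hγ0, hγη⟩, rfl⟩
    have habs : |γ| < η := by rw [abs_of_pos hγ0]; exact hγη
    have := hcon γ habs
    simp only [Set.mem_setOf_eq, Polynomial.IsRoot]
    rw [hPev]
    exact this
  have hinf : ((fun γ : ℝ => (γ : ℂ)) '' Set.Ioo 0 η).Infinite := by
    apply Set.Infinite.image
    · exact Complex.ofReal_injective.injOn
    · exact Set.Ioo_infinite hη
  exact hinf (hfin.subset hsub)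
end

section
/- Let (Ω, ℱ, ℙ) be a probability space, ℓ and T(n), n ≥ 0, be ℕ∪{∞}-valued random variables, and suppose: (a) 𝔼 e^{α T(n)} ≤ Cⁿ for all n ≥ 1, where α > 0, C ≥ 1; (b) ℙ{ℓ > T(n+1)} ≤ pⁿ for all n ≥ 0, where p ∈ (0,1); (c) ℓ ≤ sup_n T(n) whenever ℓ < ∞ in the sense that for each ω with ℓ(ω) < ∞ there is n with T(n) < ℓ ≤ T(n+1), or ℓ ≤ T(1). Then for r > 1 with C^{1/r} p^{1−1/r} < 1 and any c > 0 with rc < α, one has 𝔼 e^{cℓ} ≤ 1 + C^{1/r} p^{(1/r)−1} Σ_{n≥0} (C^{1/r} p^{1−1/r})ⁿ < ∞. -/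
open MeasureTheory ENNReal

/-- `eexp α m` is `e^{α m} ∈ ℝ≥0∞` for `m ∈ ℕ ∪ {∞}` (for `α ≥ 0`). -/
noncomputable def eexp (α : ℝ) (m : ℕ∞) : ℝ≥0∞ :=
  ⨆ n : ℕ, if (n : ℕ∞) ≤ m then ENNReal.ofReal (Real.exp (α * n)) else 0

lemma eexp_mono {c : ℝ} {m m' : ℕ∞} (h : m ≤ m') : eexp c m ≤ eexp c m' := by
  refine iSup_mono fun n => ?_
  by_cases hn : (n : ℕ∞) ≤ m
  · simp only [hn, if_true, hn.trans h, if_true, le_refl]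
  · simp [hn]

lemma eexp_coe {c : ℝ} (hc : 0 ≤ c) (k : ℕ) :
    eexp c (k : ℕ∞) = ENNReal.ofReal (Real.exp (c * k)) := by
  unfold eexp
  apply le_antisymm
  · refine iSup_le fun n => ?_
    by_cases hn : (n : ℕ∞) ≤ (k : ℕ∞)
    · simp only [hn, if_true]
      refine ENNReal.ofReal_le_ofReal (Real.exp_le_exp.2 ?_)
      have hnk : (n : ℕ) ≤ k := by exact_mod_cast hn
      exact mul_le_mul_of_nonneg_left (by exact_mod_cast hnk) hc
    · simp [hn]
  · exact le_iSup_of_le k (by simp)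

lemma eexp_top {c : ℝ} (hc : 0 < c) : eexp c (⊤ : ℕ∞) = ⊤ := by
  unfold eexp
  simp only [le_top, if_true]
  rw [iSup_eq_top]
  intro b hb
  obtain ⟨n, hn⟩ : ∃ n : ℕ, b.toReal < c * n := by
    refine ⟨⌈(b.toReal + 1) / c⌉₊, ?_⟩
    have h1 : (b.toReal + 1) / c ≤ (⌈(b.toReal + 1) / c⌉₊ : ℝ) := Nat.le_ceil _
    have := (div_le_iff₀ hc).1 h1
    nlinarith
  refine ⟨n, ?_⟩
  rw [ENNReal.lt_ofReal_iff_toReal_lt hb.ne]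
  have := Real.add_one_le_exp (c * n)
  linarith

lemma eexp_rpow_le {c α r : ℝ} (hc : 0 < c) (hα : 0 < α) (hr : 0 < r)
    (h : c * r ≤ α) (m : ℕ∞) : (eexp c m) ^ r ≤ eexp α m := by
  cases m with
  | top => rw [eexp_top hc, eexp_top hα, ENNReal.top_rpow_of_pos hr]
  | coe k =>
      rw [eexp_coe hc.le, eexp_coe hα.le,
        ENNReal.ofReal_rpow_of_pos (Real.exp_pos _), ← Real.exp_mul]
      refine ENNReal.ofReal_le_ofReal (Real.exp_le_exp.2 ?_)
      have hk : (0:ℝ) ≤ (k:ℝ) := Nat.cast_nonneg k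
      nlinarith

/-- Abstract exponential-moment estimate: if `𝔼 e^{αT(n)} ≤ Cⁿ`,
`ℙ{ℓ > T(n+1)} ≤ pⁿ`, and `ℓ` is dominated by the stopping times `T(n)` where
finite, then for `r > 1` with `C^{1/r} p^{1−1/r} < 1` and `0 < c` with `rc < α`,
`𝔼 e^{cℓ} ≤ 1 + C^{1/r} p^{1/r − 1} Σₙ (C^{1/r} p^{1−1/r})ⁿ < ∞`. -/
theorem stmt_6 {Ω : Type*} [MeasurableSpace Ω] (P : Measure Ω)
    [IsProbabilityMeasure P] (ℓ : Ω → ℕ∞) (T : ℕ → Ω → ℕ∞)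
    (α C p : ℝ) (hα : 0 < α) (hC : 1 ≤ C) (hp0 : 0 < p) (hp1 : p < 1)
    (ha : ∀ n : ℕ, 1 ≤ n → ∫⁻ ω, eexp α (T n ω) ∂P ≤ ENNReal.ofReal (C ^ n))
    (hb : ∀ n : ℕ, P {ω | T (n + 1) ω < ℓ ω} ≤ ENNReal.ofReal (p ^ n))
    (hc : ∀ ω, ℓ ω ≠ ⊤ →
      (ℓ ω ≤ T 1 ω ∨ ∃ n : ℕ, T n ω < ℓ ω ∧ ℓ ω ≤ T (n + 1) ω)) :
    ∀ r : ℝ, 1 < r → C ^ (1 / r) * p ^ (1 - 1 / r) < 1 →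
      ∀ c : ℝ, 0 < c → r * c < α →
        (∫⁻ ω, eexp c (ℓ ω) ∂P ≤
          ENNReal.ofReal (1 + C ^ (1 / r) * p ^ (1 / r - 1) *
            ∑' n : ℕ, (C ^ (1 / r) * p ^ (1 - 1 / r)) ^ n)) ∧
        (∫⁻ ω, eexp c (ℓ ω) ∂P < ⊤) := by
  intro r hr hs1 c hc0 hrc
  classical
  have hC0 : (0:ℝ) < C := lt_of_lt_of_le one_pos hC
  set s : ℝ := C ^ (1 / r) * p ^ (1 - 1 / r) with hs_def
  set K : ℝ := C ^ (1 / r) * p ^ (1 / r - 1) with hK_def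
  have hs0 : 0 ≤ s := mul_nonneg (Real.rpow_nonneg hC0.le _) (Real.rpow_nonneg hp0.le _)
  have hK0 : 0 ≤ K := mul_nonneg (Real.rpow_nonneg hC0.le _) (Real.rpow_nonneg hp0.le _)
  have hsum : Summable (fun n : ℕ => K * s ^ n) :=
    (summable_geometric_of_lt_one hs0 hs1).mul_left K
  have htsum0 : 0 ≤ ∑' n : ℕ, s ^ n := tsum_nonneg fun n => pow_nonneg hs0 n
  -- conjugate exponent
  have hq : r.HolderConjugate (Real.conjExponent r) := Real.HolderConjugate.conjExponent hr
  set q : ℝ := Real.conjExponent r with hq_def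
  have hq0 : 0 < q := hq.symm.pos
  have h1q : 1 / q = 1 - 1 / r := by
    have := hq.inv_add_inv_eq_one
    rw [one_div, one_div]; linarith
  have hr0 : (0:ℝ) < r := lt_trans zero_lt_one hr
  -- measurable hulls of the bad sets
  set A : ℕ → Set Ω := fun n => toMeasurable P {ω | T (n + 1) ω < ℓ ω} with hA_def
  have hAm : ∀ n, MeasurableSet (A n) := fun n => measurableSet_toMeasurable _ _
  have hAle : ∀ n, P (A n) ≤ ENNReal.ofReal (p ^ n) := fun n => by
    rw [hA_def]; simpa [measure_toMeasurable] using hb n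
  set D : ℕ → Set Ω := fun n => (A n)ᶜ ∩ ⋂ m ∈ Finset.range n, A m with hD_def
  have hDm : ∀ n, MeasurableSet (D n) :=
    fun n => (hAm n).compl.inter (Finset.measurableSet_biInter _ fun m _ => hAm m)
  have hDsubA : ∀ m n, m < n → D n ⊆ A m := by
    intro m n h ω hω
    have h2 := hω.2
    simp only [Set.mem_iInter] at h2
    exact h2 m (Finset.mem_range.2 h)
  have hDdisj : Pairwise (Function.onFun Disjoint D) := by
    intro m n hmn
    rcases hmn.lt_or_gt with h | h
    · exact Set.disjoint_left.2 fun ω hm hn => hm.1 (hDsubA m n h hn)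
    · exact Set.disjoint_left.2 fun ω hm hn => hn.1 (hDsubA n m h hm)
  have hDcover : ∀ ω, ω ∉ (⋃ k, D k) → ∀ n, ω ∈ A n := by
    intro ω hω n
    by_contra hcon
    have hex : ∃ k, ω ∉ A k := ⟨n, hcon⟩
    refine hω (Set.mem_iUnion.2 ⟨Nat.find hex, ⟨Nat.find_spec hex, ?_⟩⟩)
    simp only [Set.mem_iInter]
    intro m hm
    have := Nat.find_min hex (Finset.mem_range.1 hm)
    exact not_not.1 this
  have hNnull : P ((⋃ k, D k)ᶜ) = 0 := by
    refine le_antisymm ?_ zero_le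
    have hlim : Filter.Tendsto (fun n : ℕ => ENNReal.ofReal (p ^ n))
        Filter.atTop (nhds 0) := by
      rw [← ENNReal.ofReal_zero]
      exact (ENNReal.continuous_ofReal.tendsto 0).comp
        (tendsto_pow_atTop_nhds_zero_of_lt_one hp0.le hp1)
    refine ge_of_tendsto' hlim fun n => ?_
    exact (measure_mono fun ω hω => hDcover ω hω n).trans (hAle n)
  -- the main estimate
  have main : ∫⁻ ω, eexp c (ℓ ω) ∂P ≤ ENNReal.ofReal (1 + K * ∑' n : ℕ, s ^ n) := by
    rw [MeasureTheory.lintegral_def]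
    refine iSup₂_le fun g hg => ?_
    rw [← SimpleFunc.lintegral_eq_lintegral]
    have hgm : Measurable (g : Ω → ℝ≥0∞) := g.measurable
    -- key pointwise bound on each piece
    have hkey : ∀ n, ∀ ω ∈ D n, g ω ≤ eexp c (T (n + 1) ω) := by
      intro n ω hω
      have h1 : ω ∉ {ω | T (n + 1) ω < ℓ ω} :=
        fun hS => hω.1 (subset_toMeasurable P _ hS)
      exact (hg ω).trans (eexp_mono (not_lt.1 h1))
    -- decomposition
    have hdecomp : ∫⁻ a, g a ∂P = ∑' n, ∫⁻ a in D n, g a ∂P := by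
      have hU : MeasurableSet (⋃ k, D k) := MeasurableSet.iUnion hDm
      have hae : ∀ᵐ ω ∂P, ω ∈ ⋃ k, D k := by
        rw [MeasureTheory.ae_iff]
        exact hNnull
      have h1 : ∫⁻ a, g a ∂P = ∫⁻ a, (⋃ k, D k).indicator g a ∂P := by
        refine lintegral_congr_ae ?_
        filter_upwards [hae] with ω hω
        simp [Set.indicator_of_mem hω]
      rw [h1, lintegral_indicator hU, lintegral_iUnion hDm hDdisj]
    -- per-piece Hölder bound
    have hterm : ∀ n, ∫⁻ a in D n, g a ∂P ≤
        (ENNReal.ofReal (C ^ (n + 1))) ^ (1 / r) * (P (D n)) ^ (1 / q) := by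
      intro n
      set u : Ω → ℝ≥0∞ := (D n).indicator g with hu_def
      set v : Ω → ℝ≥0∞ := (D n).indicator 1 with hv_def
      have hum : Measurable u := hgm.indicator (hDm n)
      have hvm : Measurable v := measurable_const.indicator (hDm n)
      have heq : ∫⁻ a in D n, g a ∂P = ∫⁻ a, (u * v) a ∂P := by
        rw [← lintegral_indicator (hDm n)]
        refine lintegral_congr fun ω => ?_
        by_cases hω : ω ∈ D n <;>
          simp [hu_def, hv_def, Set.indicator_of_mem, Set.indicator_of_notMem, hω]
      rw [heq]
      refine (ENNReal.lintegral_mul_le_Lp_mul_Lq P hq hum.aemeasurable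
        hvm.aemeasurable).trans ?_
      have hu_bound : ∫⁻ a, u a ^ r ∂P ≤ ENNReal.ofReal (C ^ (n + 1)) := by
        refine (lintegral_mono fun ω => ?_).trans (ha (n + 1) (Nat.le_add_left 1 n))
        by_cases hω : ω ∈ D n
        · have h1 : u ω = g ω := Set.indicator_of_mem hω g
          calc u ω ^ r ≤ (eexp c (T (n + 1) ω)) ^ r := by
                rw [h1]; exact ENNReal.rpow_le_rpow (hkey n ω hω) hr0.le
            _ ≤ eexp α (T (n + 1) ω) :=
                eexp_rpow_le hc0 hα hr0 (by nlinarith) _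
        · have h0 : u ω = 0 := Set.indicator_of_notMem hω _
          rw [h0]
          simp [ENNReal.zero_rpow_of_pos hr0]
      have hv_eq : ∫⁻ a, v a ^ q ∂P = P (D n) := by
        have h1 : ∀ ω, v ω ^ q = (D n).indicator 1 ω := fun ω => by
          by_cases hω : ω ∈ D n <;>
            simp [hv_def, hω, ENNReal.zero_rpow_of_pos hq0]
        rw [lintegral_congr h1, lintegral_indicator_one (hDm n)]
      rw [hv_eq]
      exact mul_le_mul' (ENNReal.rpow_le_rpow hu_bound (by positivity)) le_rfl
    -- numerical bound per piece
    have hfinal : ∀ n, (ENNReal.ofReal (C ^ (n + 1))) ^ (1 / r) * (P (D n)) ^ (1 / q)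
        ≤ ENNReal.ofReal (K * s ^ n) := by
      intro n
      cases n with
      | zero =>
          have h1 : (P (D 0)) ^ (1 / q) ≤ 1 :=
            ENNReal.rpow_le_one prob_le_one (by positivity)
          calc (ENNReal.ofReal (C ^ (0 + 1))) ^ (1 / r) * (P (D 0)) ^ (1 / q)
              ≤ (ENNReal.ofReal (C ^ (0 + 1))) ^ (1 / r) * 1 := mul_le_mul' le_rfl h1
            _ = ENNReal.ofReal (C ^ (1 / r)) := by
                rw [mul_one, pow_one, ENNReal.ofReal_rpow_of_pos hC0]
            _ ≤ ENNReal.ofReal (K * s ^ 0) := by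
                refine ENNReal.ofReal_le_ofReal ?_
                rw [pow_zero, mul_one, hK_def]
                refine le_mul_of_one_le_right (Real.rpow_nonneg hC0.le _) ?_
                exact Real.one_le_rpow_of_pos_of_le_one_of_nonpos hp0 hp1.le
                  (by rw [sub_nonpos, div_le_one hr0]; linarith)
      | succ n =>
          have hPD : P (D (n + 1)) ≤ ENNReal.ofReal (p ^ n) :=
            (measure_mono (hDsubA n (n + 1) (Nat.lt_succ_self n))).trans (hAle n)
          have hx : (ENNReal.ofReal (C ^ (n + 2))) ^ (1 / r)
              = ENNReal.ofReal ((C ^ (n + 2)) ^ (1 / r)) :=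
            ENNReal.ofReal_rpow_of_pos (by positivity)
          calc (ENNReal.ofReal (C ^ (n + 1 + 1))) ^ (1 / r) * (P (D (n + 1))) ^ (1 / q)
              ≤ (ENNReal.ofReal (C ^ (n + 2))) ^ (1 / r) *
                (ENNReal.ofReal (p ^ n)) ^ (1 / q) := by
                exact mul_le_mul' le_rfl (ENNReal.rpow_le_rpow hPD (by positivity))
            _ = ENNReal.ofReal ((C ^ (n + 2)) ^ (1 / r) * (p ^ n) ^ (1 / q)) := by
                rw [hx, ENNReal.ofReal_rpow_of_pos (by positivity),
                  ← ENNReal.ofReal_mul (by positivity)]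
            _ ≤ ENNReal.ofReal (K * s ^ (n + 1)) := by
                refine ENNReal.ofReal_le_ofReal (le_of_eq ?_)
                rw [h1q, hK_def, hs_def, mul_pow,
                  ← Real.rpow_natCast (C ^ (1 / r)) (n + 1),
                  ← Real.rpow_natCast (p ^ (1 - 1 / r)) (n + 1),
                  ← Real.rpow_mul hC0.le, ← Real.rpow_mul hp0.le,
                  ← Real.rpow_natCast C (n + 2), ← Real.rpow_natCast p n,
                  ← Real.rpow_mul hC0.le, ← Real.rpow_mul hp0.le,
                  mul_mul_mul_comm, ← Real.rpow_add hC0, ← Real.rpow_add hp0]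
                congr 1 <;> push_cast <;> ring
    calc ∫⁻ a, g a ∂P = ∑' n, ∫⁻ a in D n, g a ∂P := hdecomp
      _ ≤ ∑' n, ENNReal.ofReal (K * s ^ n) :=
          ENNReal.tsum_le_tsum fun n => (hterm n).trans (hfinal n)
      _ = ENNReal.ofReal (∑' n, K * s ^ n) :=
          (ENNReal.ofReal_tsum_of_nonneg (fun n => by positivity) hsum).symm
      _ = ENNReal.ofReal (K * ∑' n : ℕ, s ^ n) := by rw [tsum_mul_left]
      _ ≤ ENNReal.ofReal (1 + K * ∑' n : ℕ, s ^ n) :=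
          ENNReal.ofReal_le_ofReal (by nlinarith)
  exact ⟨main, lt_of_le_of_lt main ENNReal.ofReal_lt_top⟩
end

section
/- In the setting of the previous statement, conversely: if ν with polar disintegration ν(dr,du) = μ_r(du) γ(dr) is stationary on ℂⁿ \ {0} for a random norm-preserving linear map U, then for γ-almost every r ∈ (0,∞) the measure μ_r is stationary for the induced Markov chain on the unit sphere S. -/
open MeasureTheory ENNReal ProbabilityTheory

/-- Converse of the polar-decomposition stationarity: if `ν(dr,du) = μ_r(du)γ(dr)`
is stationary on `ℂⁿ ∖ {0}` for a random norm-preserving linear map `U`, then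
`γ`-almost every `μ_r` is stationary for the induced chain on the unit sphere;
if moreover the stationary measure `μ` on the sphere is unique, then `μ_r = μ`
for `γ`-a.e. `r`. -/
theorem stmt_12 {n : ℕ} [MeasurableSpace (EuclideanSpace ℂ (Fin n))]
    [BorelSpace (EuclideanSpace ℂ (Fin n))]
    {Ω : Type*} [MeasurableSpace Ω] (Pm : Measure Ω) [IsProbabilityMeasure Pm]
    (U : Ω → (EuclideanSpace ℂ (Fin n) →ₗ[ℂ] EuclideanSpace ℂ (Fin n)))
    (hUmeas : ∀ z, Measurable fun ω => U ω z)
    (hUnorm : ∀ᵐ ω ∂Pm, ∀ v, ‖U ω v‖ = ‖v‖)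
    (P : EuclideanSpace ℂ (Fin n) → Measure (EuclideanSpace ℂ (Fin n)))
    (hP : ∀ z, P z = Pm.map fun ω => U ω z)
    (hPmeas : Measurable P)
    (γ : Measure ℝ) [IsProbabilityMeasure γ] (hγ : γ (Set.Iic (0:ℝ)) = 0)
    (μr : ℝ → Measure (EuclideanSpace ℂ (Fin n)))
    (hμrmeas : Measurable μr)
    (hμrprob : ∀ r, IsProbabilityMeasure (μr r))
    (hμrS : ∀ r, μr r
      ((Metric.sphere (0 : EuclideanSpace ℂ (Fin n)) 1 : Set (EuclideanSpace ℂ (Fin n)))ᶜ) = 0)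
    (hstat : (γ.bind fun r => (μr r).map fun u => r • u).bind P
      = γ.bind fun r => (μr r).map fun u => r • u) :
    (∀ᵐ r ∂γ, (μr r).bind P = μr r) ∧
    (∀ μ : Measure (EuclideanSpace ℂ (Fin n)), IsProbabilityMeasure μ →
      (∀ μ' : Measure (EuclideanSpace ℂ (Fin n)), IsProbabilityMeasure μ' →
        μ' ((Metric.sphere (0 : EuclideanSpace ℂ (Fin n)) 1 :
          Set (EuclideanSpace ℂ (Fin n)))ᶜ) = 0 →
        μ'.bind P = μ' → μ' = μ) →
      ∀ᵐ r ∂γ, μr r = μ) := by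
  classical
  set S : Set (EuclideanSpace ℂ (Fin n)) := Metric.sphere 0 1 with hSdef
  set Θ : EuclideanSpace ℂ (Fin n) → ℝ × EuclideanSpace ℂ (Fin n) :=
    fun v => (‖v‖, (‖v‖ : ℝ)⁻¹ • v) with hΘdef
  have hΘmeas : Measurable Θ := by
    exact (measurable_norm).prodMk ((measurable_norm.inv).smul measurable_id)
  -- each P z is a probability measure
  have hPprob : ∀ z, IsProbabilityMeasure (P z) := by
    intro z; rw [hP]; exact Measure.isProbabilityMeasure_map (hUmeas z).aemeasurable
  -- P is supported on the sphere when started on the sphere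
  have hPsphere : ∀ u ∈ S, P u Sᶜ = 0 := by
    intro u hu
    rw [hP, Measure.map_apply (hUmeas u) Metric.isClosed_sphere.measurableSet.compl]
    refine measure_mono_null ?_ (mem_ae_iff.mp hUnorm)
    intro ω hω
    simp only [Set.mem_setOf_eq, Set.mem_preimage, Set.mem_compl_iff] at hω ⊢
    intro hall
    apply hω
    simp only [hSdef, Metric.mem_sphere, dist_zero_right] at hu ⊢
    rw [hall u, hu]
  -- scaling relation for P
  have hPsmul : ∀ (r : ℝ) (u : EuclideanSpace ℂ (Fin n)),
      P (r • u) = (P u).map (fun w => r • w) := by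
    intro r u
    rw [hP, hP, Measure.map_map (measurable_const_smul r) (hUmeas u)]
    congr 1
    funext ω
    simp [Function.comp, LinearMap.map_smul_of_tower]
  -- measurability of the scaled family
  have hsmul2 : Measurable (fun p : ℝ × EuclideanSpace ℂ (Fin n) => p.1 • p.2) :=
    measurable_smul
  -- kernels
  set κ1 : Kernel ℝ (EuclideanSpace ℂ (Fin n)) := ⟨μr, hμrmeas⟩ with hκ1def
  have hbindmeas : Measurable (fun r => (μr r).bind P) :=
    (Measure.measurable_bind' hPmeas).comp hμrmeas
  set κ2 : Kernel ℝ (EuclideanSpace ℂ (Fin n)) := ⟨fun r => (μr r).bind P, hbindmeas⟩ with hκ2def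
  have hκ1app : ∀ r, κ1 r = μr r := fun _ => rfl
  have hκ2app : ∀ r, κ2 r = (μr r).bind P := fun _ => rfl
  have hbindprob : ∀ r, IsProbabilityMeasure ((μr r).bind P) := by
    intro r
    constructor
    rw [Measure.bind_apply MeasurableSet.univ hPmeas.aemeasurable]
    have : ∀ v, P v Set.univ = 1 := fun v => (hPprob v).measure_univ
    simp [this]
  haveI : IsMarkovKernel κ1 := ⟨fun r => hμrprob r⟩
  haveI : IsMarkovKernel κ2 := ⟨fun r => hbindprob r⟩
  -- the measurable map family r ↦ (μr r).map (r • ·)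
  have hmapmeas : Measurable (fun r : ℝ => (μr r).map fun u => r • u) := by
    rw [Measure.measurable_measure]
    intro t ht
    have heq : ∀ r : ℝ, (μr r).map (fun u => r • u) t
        = κ1 r (Prod.mk r ⁻¹' ((fun p : ℝ × EuclideanSpace ℂ (Fin n) => p.1 • p.2) ⁻¹' t)) := by
      intro r
      rw [hκ1app, Measure.map_apply (measurable_const_smul r) ht]
      rfl
    simp_rw [heq]
    exact Kernel.measurable_kernel_prodMk_left (hsmul2 ht)
  set ν : Measure (EuclideanSpace ℂ (Fin n)) := γ.bind fun r => (μr r).map fun u => r • u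
    with hνdef
  have hνprob : IsProbabilityMeasure ν := by
    constructor
    rw [hνdef, Measure.bind_apply MeasurableSet.univ hmapmeas.aemeasurable]
    have : ∀ r : ℝ, ((μr r).map fun u => r • u) Set.univ = 1 := by
      intro r
      haveI := hμrprob r
      haveI : IsProbabilityMeasure ((μr r).map fun u => r • u) :=
        Measure.isProbabilityMeasure_map (measurable_const_smul r).aemeasurable
      exact measure_univ
    simp [this]
  -- a.e. positivity of r
  have hrpos : ∀ᵐ r ∂γ, 0 < r := by
    rw [ae_iff]
    refine measure_mono_null ?_ hγ
    intro r hr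
    simpa using hr
  -- agreement on the sphere lemma
  have hsets : ∀ (r : ℝ), 0 < r → ∀ u ∈ S, Θ (r • u) = (r, u) := by
    intro r hr u hu
    simp only [hSdef, Metric.mem_sphere, dist_zero_right] at hu
    have hnorm : ‖r • u‖ = r := by
      rw [norm_smul, hu, Real.norm_eq_abs, abs_of_pos hr, mul_one]
    simp only [hΘdef, hnorm]
    rw [inv_smul_smul₀ (ne_of_gt hr)]
  -- measures agree on sets that agree on S
  have hagree : ∀ (m : Measure (EuclideanSpace ℂ (Fin n))), m Sᶜ = 0 →
      ∀ (A B : Set (EuclideanSpace ℂ (Fin n))), A ∩ S = B ∩ S → m A = m B := by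
    intro m hm A B hAB
    rw [← measure_inter_conull (s := A) hm, ← measure_inter_conull (s := B) hm, hAB]
  -- Claim A : ν.map Θ = γ ⊗ₘ κ1
  have claimA : ν.map Θ = γ.compProd κ1 := by
    ext s hs
    rw [Measure.map_apply hΘmeas hs, hνdef,
      Measure.bind_apply (hΘmeas hs) hmapmeas.aemeasurable, Measure.compProd_apply hs]
    refine lintegral_congr_ae (hrpos.mono fun r hr => ?_)
    dsimp only
    rw [Measure.map_apply (measurable_const_smul r) (hΘmeas hs), hκ1app]
    refine hagree (μr r) (hμrS r) _ _ ?_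
    ext u
    simp only [Set.mem_inter_iff, Set.mem_preimage, Set.mem_setOf_eq]
    constructor
    · rintro ⟨h1, h2⟩; rw [hsets r hr u h2] at h1; exact ⟨h1, h2⟩
    · rintro ⟨h1, h2⟩; rw [hsets r hr u h2]; exact ⟨h1, h2⟩
  -- Claim B : ν.map Θ = γ ⊗ₘ κ2
  have claimB : ν.map Θ = γ.compProd κ2 := by
    ext s hs
    rw [Measure.map_apply hΘmeas hs]
    have h1 : ν (Θ ⁻¹' s) = (ν.bind P) (Θ ⁻¹' s) := by rw [hstat]
    have hfmeas : Measurable fun v => (P v) (Θ ⁻¹' s) :=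
      (Measure.measurable_coe (hΘmeas hs)).comp hPmeas
    rw [h1, Measure.bind_apply (hΘmeas hs) hPmeas.aemeasurable, hνdef,
      Measure.lintegral_bind hmapmeas.aemeasurable hfmeas.aemeasurable,
      Measure.compProd_apply hs]
    refine lintegral_congr_ae (hrpos.mono fun r hr => ?_)
    dsimp only
    rw [lintegral_map hfmeas (measurable_const_smul r), hκ2app,
      Measure.bind_apply (measurable_prodMk_left hs) hPmeas.aemeasurable]
    have huS : ∀ᵐ u ∂(μr r), u ∈ S := by
      rw [ae_iff]
      exact hμrS r
    refine lintegral_congr_ae (huS.mono fun u hu => ?_)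
    dsimp only
    rw [hPsmul r u, Measure.map_apply (measurable_const_smul r) (hΘmeas hs)]
    refine hagree (P u) (hPsphere u hu) _ _ ?_
    ext w
    simp only [Set.mem_inter_iff, Set.mem_preimage, Set.mem_setOf_eq]
    constructor
    · rintro ⟨h1, h2⟩; rw [hsets r hr w h2] at h1; exact ⟨h1, h2⟩
    · rintro ⟨h1, h2⟩; rw [hsets r hr w h2]; exact ⟨h1, h2⟩
  -- conclude via uniqueness of disintegration
  haveI : IsProbabilityMeasure (ν.map Θ) := Measure.isProbabilityMeasure_map hΘmeas.aemeasurable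
  have hfst : (ν.map Θ).fst = γ := by
    rw [claimA, Measure.fst_compProd]
  have hcomp1 : ν.map Θ = (ν.map Θ).fst.compProd κ1 := by rw [hfst, claimA]
  have hcomp2 : ν.map Θ = (ν.map Θ).fst.compProd κ2 := by rw [hfst, claimB]
  have h1 := eq_condKernel_of_measure_eq_compProd κ1 hcomp1
  have h2 := eq_condKernel_of_measure_eq_compProd κ2 hcomp2
  rw [hfst] at h1 h2
  have main : ∀ᵐ r ∂γ, (μr r).bind P = μr r := by
    filter_upwards [h1, h2] with r hr1 hr2
    rw [← hκ2app, hr2, ← hr1, hκ1app]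
  refine ⟨main, ?_⟩
  intro μ hμprob huniq
  filter_upwards [main] with r hr
  exact huniq (μr r) (hμrprob r) (hμrS r) hr
end

section
/- Under the hypotheses of the previous statement, assume additionally B₁ₖ ≠ 0 for all k = 1,…,n and that the λₖ are distinct. Then the linearized system is exactly controllable in one time unit within the tangent spaces: for any y₀ ∈ T_{e₁}S = {x ∈ ℂⁿ : Re⟨x, e₁⟩ = 0} and any y₁′ ∈ T_{e₁e^{−iλ₁}}S, there exists a real-valued w ∈ Eₙ (span of real trigonometric polynomials with frequencies μₖ = λ_{k+1} − λ₁, normalized so that w is real) with y(1) = y₁′. -/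
open Complex MeasureTheory intervalIntegral

lemma hasDerivAt_cexp_real (c : ℂ) (t : ℝ) :
    HasDerivAt (fun s : ℝ => Complex.exp (c * s)) (c * Complex.exp (c * t)) t := by
  have h : HasDerivAt (fun w : ℂ => Complex.exp (c * w)) (Complex.exp (c * t) * c) (t : ℂ) :=
    by simpa using ((hasDerivAt_id ((t : ℂ))).const_mul c).cexp
  simpa [mul_comm] using h.comp_ofReal

-- vandermonde-style: finitely many power moments vanish ⟹ coefficients vanish
lemma vand_zero {ι : Type*} [Fintype ι] [DecidableEq ι] (z x : ι → ℂ)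
    (hz : Function.Injective z)
    (h : ∀ m : ℕ, ∑ i, x i * z i ^ m = 0) : x = 0 := by
  classical
  set N := Fintype.card ι with hN
  let E : ι ≃ Fin N := Fintype.equivFin ι
  let A : Matrix ι ι ℂ := ((Matrix.vandermonde (z ∘ E.symm)).submatrix E E).transpose
  have hdet : A.det ≠ 0 := by
    rw [Matrix.det_transpose, Matrix.det_submatrix_equiv_self, Matrix.det_vandermonde]
    refine Finset.prod_ne_zero_iff.2 fun i _ => Finset.prod_ne_zero_iff.2 fun j hj => ?_
    rw [Finset.mem_Ioi] at hj
    refine sub_ne_zero_of_ne fun hc => absurd (E.symm.injective (hz hc)) (ne_of_gt hj)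
  have hmv : A.mulVec x = 0 := by
    funext i
    simp only [Matrix.mulVec, dotProduct, A, Matrix.transpose_apply,
      Matrix.submatrix_apply, Matrix.vandermonde_apply, Function.comp_apply, Equiv.symm_apply_apply]
    simpa [mul_comm] using h (E i)
  have := Matrix.eq_zero_of_mulVec_eq_zero hdet hmv
  exact this

lemma intervalIntegral_conj {f : ℝ → ℂ} {a b : ℝ} :
    (∫ s in a..b, (starRingEnd ℂ) (f s)) = (starRingEnd ℂ) (∫ s in a..b, f s) := by
  rw [intervalIntegral, intervalIntegral, integral_conj, integral_conj, map_sub]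

section ExpSum
variable {ι : Type*} [Fintype ι] [DecidableEq ι]

lemma iteratedDeriv_zero_fun (m : ℕ) : iteratedDeriv m (fun _ : ℝ => (0:ℂ)) = fun _ => 0 := by
  induction m with
  | zero => simp [iteratedDeriv_zero]
  | succ m ih => rw [iteratedDeriv_succ, ih]; simp

noncomputable def expSum (z x : ι → ℂ) : ℝ → ℂ := fun t => ∑ i, x i * Complex.exp (z i * t)

lemma expSum_hasDerivAt (z x : ι → ℂ) (t : ℝ) :
    HasDerivAt (expSum z x) (expSum z (fun i => z i * x i) t) t := by
  unfold expSum
  refine HasDerivAt.fun_sum fun i _ => ?_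
  simpa [mul_assoc, mul_left_comm] using (hasDerivAt_cexp_real (z i) t).const_mul (x i)

lemma deriv_expSum (z x : ι → ℂ) :
    deriv (expSum z x) = expSum z (fun i => z i * x i) := by
  funext t; exact (expSum_hasDerivAt z x t).deriv

lemma iteratedDeriv_expSum (m : ℕ) (z x : ι → ℂ) :
    iteratedDeriv m (expSum z x) = expSum z (fun i => z i ^ m * x i) := by
  induction m generalizing x with
  | zero => simp [iteratedDeriv_zero]
  | succ m ih =>
    rw [iteratedDeriv_succ', deriv_expSum, ih]
    unfold expSum; funext t
    refine Finset.sum_congr rfl fun i _ => by ring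

/-- If an exponential sum with pairwise distinct frequencies vanishes near a point,
all its coefficients vanish. -/
lemma expSum_coeffs_zero (z x : ι → ℂ) (hz : Function.Injective z) (t₀ : ℝ)
    (h : ∀ᶠ t in nhds t₀, expSum z x t = 0) : x = 0 := by
  have hd : ∀ m : ℕ, iteratedDeriv m (expSum z x) t₀ = 0 := by
    intro m
    have := (Filter.EventuallyEq.iteratedDeriv_eq m (h : expSum z x =ᶠ[nhds t₀] (fun _ => 0)))
    rw [this, iteratedDeriv_zero_fun]
  have key : (fun i => x i * Complex.exp (z i * t₀)) = 0 := by
    apply vand_zero z _ hz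
    intro m
    have := hd m
    rw [iteratedDeriv_expSum] at this
    simpa [expSum, mul_comm, mul_assoc, mul_left_comm] using this
  funext i
  have := congrFun key i
  simp only [Pi.zero_apply, mul_eq_zero] at this
  rcases this with h1 | h2
  · exact h1
  · exact absurd h2 (Complex.exp_ne_zero _)

end ExpSum

section W
variable {n : ℕ}

noncomputable def wf (μ : Fin (n+1) → ℝ) (d : Fin (n+1) → ℂ) : ℝ → ℂ :=
  fun t => ∑ k, (d k * Complex.exp ((I*(μ k:ℂ)) * t) +
    (starRingEnd ℂ) (d k) * Complex.exp ((-(I*(μ k:ℂ))) * t))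

lemma wf_continuous (μ : Fin (n+1) → ℝ) (d : Fin (n+1) → ℂ) : Continuous (wf μ d) := by
  unfold wf
  exact continuous_finset_sum _ fun k _ =>
    ((continuous_const.mul (by fun_prop)).add (continuous_const.mul (by fun_prop)))

lemma conj_exp_real (a : ℝ) (t : ℝ) :
    (starRingEnd ℂ) (Complex.exp ((I*(a:ℂ)) * t)) = Complex.exp ((-(I*(a:ℂ))) * t) := by
  rw [← Complex.exp_conj]
  congr 1
  simp [map_mul, Complex.conj_ofReal]

lemma wf_im (μ : Fin (n+1) → ℝ) (d : Fin (n+1) → ℂ) (t : ℝ) : (wf μ d t).im = 0 := by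
  unfold wf
  rw [Complex.im_sum]
  refine Finset.sum_eq_zero fun k _ => ?_
  rw [← conj_exp_real, ← map_mul]
  simp only [Complex.add_im, Complex.conj_im]
  ring

lemma wf_real (μ : Fin (n+1) → ℝ) (d : Fin (n+1) → ℂ) (t : ℝ) :
    wf μ d t = ((wf μ d t).re : ℂ) := by
  rw [← Complex.re_add_im (wf μ d t), wf_im]
  simp

/-- frequency index for the reindexed exponential sum -/
noncomputable def nuf (μ : Fin (n+1) → ℝ) : Option (Fin n ⊕ Fin n) → ℝ
  | none => 0
  | some (Sum.inl j) => μ j.succ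
  | some (Sum.inr j) => -(μ j.succ)

noncomputable def xcoef (d : Fin (n+1) → ℂ) : Option (Fin n ⊕ Fin n) → ℂ
  | none => d 0 + (starRingEnd ℂ) (d 0)
  | some (Sum.inl j) => d j.succ
  | some (Sum.inr j) => (starRingEnd ℂ) (d j.succ)

lemma nuf_injective (μ : Fin (n+1) → ℝ) (hμ : StrictMono μ) (hμ0 : μ 0 = 0) :
    Function.Injective (nuf μ) := by
  have hpos : ∀ j : Fin n, 0 < μ j.succ := fun j => by
    have := hμ (Fin.succ_pos j); rwa [hμ0] at this
  intro i j h
  match i, j with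
  | none, none => rfl
  | none, some (Sum.inl b) => exact absurd h.symm (ne_of_gt (by simpa [nuf] using hpos b))
  | none, some (Sum.inr b) => exact absurd h.symm (ne_of_lt (by simpa [nuf] using hpos b))
  | some (Sum.inl a), none => exact absurd h (ne_of_gt (by simpa [nuf] using hpos a))
  | some (Sum.inr a), none => exact absurd h (ne_of_lt (by simpa [nuf] using hpos a))
  | some (Sum.inl a), some (Sum.inl b) =>
    simp only [nuf] at h
    exact congrArg _ (congrArg _ (Fin.succ_injective _ (hμ.injective h)))
  | some (Sum.inr a), some (Sum.inr b) =>
    simp only [nuf, neg_inj] at h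
    exact congrArg _ (congrArg _ (Fin.succ_injective _ (hμ.injective h)))
  | some (Sum.inl a), some (Sum.inr b) =>
    simp only [nuf] at h
    nlinarith [hpos a, hpos b]
  | some (Sum.inr a), some (Sum.inl b) =>
    simp only [nuf] at h
    nlinarith [hpos a, hpos b]

lemma wf_eq_expSum (μ : Fin (n+1) → ℝ) (hμ0 : μ 0 = 0) (d : Fin (n+1) → ℂ) (t : ℝ) :
    wf μ d t = expSum (fun i => I * ((nuf μ i : ℝ) : ℂ)) (xcoef d) t := by
  unfold wf expSum
  rw [Fintype.sum_option, Fintype.sum_sum_type, Fin.sum_univ_succ]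
  rw [Finset.sum_add_distrib]
  simp only [nuf, xcoef, hμ0]
  push_cast
  simp only [mul_zero, zero_mul, Complex.exp_zero, mul_one, neg_zero]
  congr 1
  congr 1
  refine Finset.sum_congr rfl fun j _ => ?_
  congr 2
  ring

lemma inj_core (μ : Fin (n+1) → ℝ) (hμ : StrictMono μ) (hμ0 : μ 0 = 0) (d : Fin (n+1) → ℂ)
    (him : (d 0).im = 0) (hw : ∀ t ∈ Set.Ioo (0:ℝ) 1, wf μ d t = 0) : d = 0 := by
  have hz : Function.Injective (fun i => I * ((nuf μ i : ℝ) : ℂ)) := by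
    intro i j h
    apply nuf_injective μ hμ hμ0
    have := mul_left_cancel₀ Complex.I_ne_zero h
    exact_mod_cast this
  have hev : ∀ᶠ t in nhds (1/2 : ℝ), expSum (fun i => I * ((nuf μ i : ℝ) : ℂ)) (xcoef d) t = 0 := by
    filter_upwards [isOpen_Ioo.mem_nhds (by norm_num : (1/2:ℝ) ∈ Set.Ioo 0 1)] with t ht
    rw [← wf_eq_expSum μ hμ0]
    exact hw t ht
  have hx := expSum_coeffs_zero _ _ hz _ hev
  have h0 : d 0 + (starRingEnd ℂ) (d 0) = 0 := congrFun hx none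
  have hsucc : ∀ j : Fin n, d j.succ = 0 := fun j => congrFun hx (some (Sum.inl j))
  have hre : (d 0).re = 0 := by
    have h := congrArg Complex.re h0
    simp only [Complex.add_re, Complex.conj_re, Complex.zero_re] at h
    linarith
  funext k
  induction k using Fin.cases with
  | zero => exact Complex.ext (by simpa using hre) (by simpa using him)
  | succ j => simpa using hsucc j

noncomputable def Efn (ν : ℝ) : ℂ := ∫ s in (0:ℝ)..1, Complex.exp ((I*(ν:ℂ)) * s)

lemma cexp_cont_mul_wf (c : ℂ) (μ : Fin (n+1) → ℝ) (d : Fin (n+1) → ℂ) :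
    Continuous (fun s : ℝ => Complex.exp (c * s) * wf μ d s) :=
  (by fun_prop : Continuous fun s : ℝ => Complex.exp (c * s)).mul (wf_continuous μ d)

lemma exp_exp_combine (a b : ℝ) (s : ℝ) :
    Complex.exp ((I*(a:ℂ)) * s) * Complex.exp ((I*(b:ℂ)) * s)
      = Complex.exp ((I*((a+b : ℝ):ℂ)) * s) := by
  rw [← Complex.exp_add]
  congr 1
  push_cast
  ring

lemma moment_bridge (μ : Fin (n+1) → ℝ) (d : Fin (n+1) → ℂ) (k : Fin (n+1)) :
    (∫ s in (0:ℝ)..1, Complex.exp ((I*(μ k:ℂ)) * s) * wf μ d s)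
      = ∑ j, (d j * Efn (μ k + μ j) + (starRingEnd ℂ) (d j) * Efn (μ k - μ j)) := by
  have hpt : ∀ s : ℝ, Complex.exp ((I*(μ k:ℂ)) * s) * wf μ d s
      = ∑ j, (d j * Complex.exp ((I*((μ k + μ j : ℝ):ℂ)) * s)
          + (starRingEnd ℂ) (d j) * Complex.exp ((I*((μ k - μ j : ℝ):ℂ)) * s)) := by
    intro s
    unfold wf
    rw [Finset.mul_sum]
    refine Finset.sum_congr rfl fun j _ => ?_
    rw [mul_add]
    congr 1
    · rw [mul_left_comm, exp_exp_combine]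
    · rw [mul_left_comm]
      congr 1
      rw [show (-(I*((μ j:ℝ):ℂ))) * s = (I*((-(μ j) : ℝ):ℂ)) * s by push_cast; ring,
        exp_exp_combine, sub_eq_add_neg]
  simp only [hpt]
  rw [intervalIntegral.integral_finset_sum]
  · refine Finset.sum_congr rfl fun j _ => ?_
    rw [intervalIntegral.integral_add, intervalIntegral.integral_const_mul,
      intervalIntegral.integral_const_mul] <;>
      [skip; exact (continuous_const.mul (by fun_prop)).intervalIntegrable _ _;
       exact (continuous_const.mul (by fun_prop)).intervalIntegrable _ _]
    rfl
  · intro j _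
    exact ((continuous_const.mul (by fun_prop)).add
      (continuous_const.mul (by fun_prop))).intervalIntegrable _ _

noncomputable def Tmap (μ : Fin (n+1) → ℝ) : (Fin (n+1) → ℂ) →ₗ[ℝ] (Fin (n+1) → ℂ) where
  toFun d := fun k =>
    (∑ j, (d j * Efn (μ k + μ j) + (starRingEnd ℂ) (d j) * Efn (μ k - μ j)))
      + (if k = 0 then (((d 0).im : ℝ) : ℂ) * I else 0)
  map_add' a b := by
    funext k
    simp only [Pi.add_apply, map_add, add_mul, Complex.add_im, Complex.ofReal_add,
      Finset.sum_add_distrib]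
    split_ifs <;> ring
  map_smul' r d := by
    funext k
    simp only [Pi.smul_apply, Complex.real_smul, map_mul, Complex.conj_ofReal,
      Complex.im_ofReal_mul, Complex.ofReal_mul, RingHom.id_apply, mul_add,
      Finset.mul_sum, mul_assoc]
    congr 1
    split_ifs <;> ring

lemma wf_conj (μ : Fin (n+1) → ℝ) (d : Fin (n+1) → ℂ) (t : ℝ) :
    (starRingEnd ℂ) (wf μ d t) = wf μ d t :=
  Complex.conj_eq_iff_im.mpr (wf_im μ d t)

lemma Tmap_inj (μ : Fin (n+1) → ℝ) (hμ : StrictMono μ) (hμ0 : μ 0 = 0) :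
    Function.Injective (Tmap μ) := by
  rw [← LinearMap.ker_eq_bot]
  rw [LinearMap.ker_eq_bot']
  intro d hd
  set Ik : Fin (n+1) → ℂ := fun k => ∫ s in (0:ℝ)..1, Complex.exp ((I*(μ k:ℂ)) * s) * wf μ d s
    with hIkdef
  have h1 : ∀ k, Ik k + (if k = 0 then (((d 0).im : ℝ) : ℂ) * I else 0) = 0 := by
    intro k
    have := congrFun hd k
    simpa [Tmap, hIkdef, moment_bridge] using this
  have hI0re : (Ik 0).im = 0 := by
    have : Ik 0 = (((∫ s in (0:ℝ)..1, (wf μ d s).re : ℝ)) : ℂ) := by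
      rw [hIkdef]
      simp only [hμ0, Complex.ofReal_zero, mul_zero, zero_mul, Complex.exp_zero, one_mul]
      rw [← intervalIntegral.integral_ofReal]
      exact intervalIntegral.integral_congr fun s _ => wf_real μ d s
    rw [this, Complex.ofReal_im]
  have him : (d 0).im = 0 := by
    have := congrArg Complex.im (h1 0)
    simpa [hI0re] using this
  have hIk : ∀ k, Ik k = 0 := by
    intro k
    have := h1 k
    rcases eq_or_ne k 0 with rfl | hk
    · simpa [him] using this
    · simpa [hk] using this
  simp only [hIkdef] at hIk
  have hIk' : ∀ k, (∫ s in (0:ℝ)..1, Complex.exp ((-(I*(μ k:ℂ))) * s) * wf μ d s) = 0 := by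
    intro k
    have heq : (fun s : ℝ => Complex.exp ((-(I*(μ k:ℂ))) * s) * wf μ d s)
        = fun s : ℝ => (starRingEnd ℂ) (Complex.exp ((I*(μ k:ℂ)) * s) * wf μ d s) := by
      funext s
      rw [map_mul, conj_exp_real, wf_conj]
    rw [heq, intervalIntegral_conj, hIk k, map_zero]
  have hsq : (∫ s in (0:ℝ)..1, wf μ d s * wf μ d s) = 0 := by
    have hpt : ∀ s : ℝ, wf μ d s * wf μ d s
        = ∑ k, (d k * (Complex.exp ((I*(μ k:ℂ)) * s) * wf μ d s)
            + (starRingEnd ℂ) (d k) * (Complex.exp ((-(I*(μ k:ℂ))) * s) * wf μ d s)) := by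
      intro s
      nth_rewrite 1 [wf]
      rw [Finset.sum_mul]
      exact Finset.sum_congr rfl fun k _ => by ring
    simp only [hpt]
    rw [intervalIntegral.integral_finset_sum]
    · refine Finset.sum_eq_zero fun k _ => ?_
      have e1 := hIk k
      rw [intervalIntegral.integral_add
          ((continuous_const.fun_mul (cexp_cont_mul_wf _ μ d)).intervalIntegrable _ _)
          ((continuous_const.fun_mul (cexp_cont_mul_wf _ μ d)).intervalIntegrable _ _),
        intervalIntegral.integral_const_mul, intervalIntegral.integral_const_mul,
        e1, hIk' k]
      simp
    · intro k _
      exact ((continuous_const.mul (cexp_cont_mul_wf _ μ d)).add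
        (continuous_const.mul (cexp_cont_mul_wf _ μ d))).intervalIntegrable _ _
  have hre0 : ∀ t ∈ Set.Icc (0:ℝ) 1, (wf μ d t).re = 0 := by
    have hofr : (((∫ s in (0:ℝ)..1, ((wf μ d s).re)^2 : ℝ)) : ℂ) = 0 := by
      rw [← intervalIntegral.integral_ofReal, ← hsq]
      refine (intervalIntegral.integral_congr fun s _ => ?_).symm
      rw [pow_two, Complex.ofReal_mul, ← wf_real μ d s]
    have hint : (∫ s in (0:ℝ)..1, ((wf μ d s).re)^2) = 0 := by exact_mod_cast hofr
    intro t ht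
    by_contra hne
    have hpos : 0 < ∫ s in (0:ℝ)..1, ((wf μ d s).re)^2 :=
      intervalIntegral.integral_pos (by norm_num)
        ((Complex.continuous_re.comp (wf_continuous μ d)).pow 2).continuousOn
        (fun x _ => sq_nonneg _)
        ⟨t, ht, pow_two_pos_of_ne_zero hne⟩
    exact absurd hint (ne_of_gt hpos)
  have hw0 : ∀ t ∈ Set.Ioo (0:ℝ) 1, wf μ d t = 0 := fun t ht => by
    rw [wf_real μ d t, hre0 t (Set.mem_Icc_of_Ioo ht)]
    simp
  exact inj_core μ hμ hμ0 d him hw0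

lemma Tmap_surj (μ : Fin (n+1) → ℝ) (hμ : StrictMono μ) (hμ0 : μ 0 = 0) :
    Function.Surjective (Tmap μ) :=
  (LinearMap.injective_iff_surjective).mp (Tmap_inj μ hμ hμ0)

end W

section Y
open intervalIntegral

variable {lk l0 : ℝ} {ak Bk : ℂ} {w : ℝ → ℂ}

noncomputable def ysol (lk l0 : ℝ) (ak Bk : ℂ) (w : ℝ → ℂ) : ℝ → ℂ :=
  fun t => Complex.exp ((-(I*(lk:ℂ))) * t) *
    (ak - I * Bk * ∫ s in (0:ℝ)..t, Complex.exp ((I*((lk - l0 : ℝ):ℂ)) * s) * w s)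

lemma ysol_zero : ysol lk l0 ak Bk w 0 = ak := by
  unfold ysol
  simp

lemma Fk_hasDerivAt (hw : Continuous w) (t : ℝ) :
    HasDerivAt (fun t : ℝ => ∫ s in (0:ℝ)..t, Complex.exp ((I*((lk - l0 : ℝ):ℂ)) * s) * w s)
      (Complex.exp ((I*((lk - l0 : ℝ):ℂ)) * t) * w t) t := by
  have hc : Continuous fun s : ℝ => Complex.exp ((I*((lk - l0 : ℝ):ℂ)) * s) * w s :=
    (by fun_prop : Continuous fun s : ℝ => Complex.exp ((I*((lk - l0 : ℝ):ℂ)) * s)).mul hw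
  exact intervalIntegral.integral_hasDerivAt_right (hc.intervalIntegrable _ _)
    (hc.stronglyMeasurableAtFilter _ _) hc.continuousAt

lemma ysol_hasDerivAt (hw : Continuous w) (t : ℝ) :
    HasDerivAt (ysol lk l0 ak Bk w)
      (-I * ((lk:ℂ) * ysol lk l0 ak Bk w t
        + (w t * Complex.exp (-I * (l0:ℂ) * t)) * Bk)) t := by
  have h1 : HasDerivAt (fun t : ℝ => ak - I * Bk *
      ∫ s in (0:ℝ)..t, Complex.exp ((I*((lk - l0 : ℝ):ℂ)) * s) * w s)
      (-(I * Bk * (Complex.exp ((I*((lk - l0 : ℝ):ℂ)) * t) * w t))) t :=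
    ((Fk_hasDerivAt hw t).const_mul (I*Bk)).const_sub ak
  have h2 := (hasDerivAt_cexp_real (-(I*(lk:ℂ))) t).fun_mul h1
  refine h2.congr_deriv ?_
  rw [show Complex.exp (-I * (l0:ℂ) * (t:ℂ))
      = Complex.exp ((-(I*(lk:ℂ))) * t) * Complex.exp ((I*((lk - l0 : ℝ):ℂ)) * t) by
    rw [← Complex.exp_add]; congr 1; push_cast; ring]
  unfold ysol
  ring

lemma ysol_continuous (hw : Continuous w) : Continuous (ysol lk l0 ak Bk w) :=
  continuous_iff_continuousAt.mpr fun t => (ysol_hasDerivAt hw t).continuousAt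

lemma ysol_integral_eq (hw : Continuous w) (t : ℝ) :
    ysol lk l0 ak Bk w t = ak - I * ∫ s in (0:ℝ)..t,
      ((lk:ℂ) * ysol lk l0 ak Bk w s + (w s * Complex.exp (-I * (l0:ℂ) * s)) * Bk) := by
  have hcont : Continuous fun s : ℝ =>
      (lk:ℂ) * ysol lk l0 ak Bk w s + (w s * Complex.exp (-I * (l0:ℂ) * s)) * Bk :=
    (continuous_const.mul (ysol_continuous hw)).add
      ((hw.mul (by fun_prop)).mul continuous_const)
  have hfc := intervalIntegral.integral_eq_sub_of_hasDerivAt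
    (f := ysol lk l0 ak Bk w)
    (f' := fun s => -I * ((lk:ℂ) * ysol lk l0 ak Bk w s
      + (w s * Complex.exp (-I * (l0:ℂ) * s)) * Bk))
    (a := 0) (b := t)
    (fun s _ => ysol_hasDerivAt hw s)
    ((continuous_const.mul hcont).intervalIntegrable _ _)
  rw [intervalIntegral.integral_const_mul, ysol_zero] at hfc
  linear_combination -hfc

end Y

/-- Exact controllability of the linearization of the Schrödinger equation in
one time unit: under `B₁ₖ ≠ 0` and distinct eigenvalues, for any
`y₀ ∈ T_{e₁}S` and `y₁′ ∈ T_{e₁e^{−iλ₁}}S` there is a real-valued trigonometric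
polynomial `w ∈ Eₙ` (frequencies `±(λₖ − λ₁)`) steering `y₀` to `y₁′`. -/
theorem stmt_15 {n : ℕ}
    (Λ B : EuclideanSpace ℂ (Fin (n + 1)) →ₗ[ℂ] EuclideanSpace ℂ (Fin (n + 1)))
    (hΛ : ∀ x y, inner ℂ (Λ x) y = (inner ℂ x (Λ y) : ℂ))
    (hB : ∀ x y, inner ℂ (B x) y = (inner ℂ x (B y) : ℂ))
    (e : Fin (n + 1) → EuclideanSpace ℂ (Fin (n + 1))) (he : Orthonormal ℂ e)
    (lam : Fin (n + 1) → ℝ) (hlam : StrictMono lam)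
    (hev : ∀ j, Λ (e j) = ((lam j : ℂ)) • e j)
    (hB1k : ∀ k, (inner ℂ (e k) (B (e 0)) : ℂ) ≠ 0)
    (y₀ y₁' : EuclideanSpace ℂ (Fin (n + 1)))
    (hy₀ : ((inner ℂ (e 0) y₀ : ℂ)).re = 0)
    (hy₁' : ((inner ℂ (Complex.exp (-Complex.I * (lam 0 : ℂ)) • e 0) y₁' : ℂ)).re = 0) :
    ∃ (d : Fin (n + 1) → ℂ) (w : ℝ → ℂ),
      (∀ t : ℝ, w t = ∑ k : Fin (n + 1),
        (d k * Complex.exp (Complex.I * ((lam k : ℂ) - (lam 0 : ℂ)) * (t : ℂ)) +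
         (starRingEnd ℂ) (d k) *
           Complex.exp (-Complex.I * ((lam k : ℂ) - (lam 0 : ℂ)) * (t : ℂ)))) ∧
      (∀ t : ℝ, (w t).im = 0) ∧
      ∃ y : ℝ → EuclideanSpace ℂ (Fin (n + 1)),
        y 0 = y₀ ∧
        (∀ t ∈ Set.Icc (0:ℝ) 1,
          y t = y 0 - Complex.I •
            ∫ s in (0:ℝ)..t,
              (Λ (y s) + (w s * Complex.exp (-Complex.I * (lam 0 : ℂ) * (s : ℂ))) • B (e 0))) ∧
        y 1 = y₁' := by
  classical
  set μ : Fin (n+1) → ℝ := fun k => lam k - lam 0 with hμdef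
  have hμmono : StrictMono μ := fun a b h => sub_lt_sub_right (hlam h) _
  have hμ0 : μ 0 = 0 := sub_self _
  have hcard : Fintype.card (Fin (n+1))
      = Module.finrank ℂ (EuclideanSpace ℂ (Fin (n+1))) := by
    simp [finrank_euclideanSpace_fin]
  have hb0 := coe_basisOfOrthonormalOfCardEqFinrank he hcard
  set b0 := basisOfOrthonormalOfCardEqFinrank he hcard with hb0def
  have hob' : Orthonormal ℂ ⇑b0 := by rwa [hb0]
  set ob := b0.toOrthonormalBasis hob' with hobdef
  have hob : ⇑ob = e := by rw [hobdef, Module.Basis.coe_toOrthonormalBasis, hb0]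
  have hexpand : ∀ x : EuclideanSpace ℂ (Fin (n+1)),
      ∑ k, (inner ℂ (e k) x : ℂ) • e k = x := by
    intro x
    have h := ob.sum_repr' x
    simp only [hob] at h
    exact h
  set ak : Fin (n+1) → ℂ := fun k => inner ℂ (e k) y₀ with hak
  set gk : Fin (n+1) → ℂ := fun k => inner ℂ (e k) y₁' with hgk
  set Bk : Fin (n+1) → ℂ := fun k => inner ℂ (e k) (B (e 0)) with hBk
  have hBkne : ∀ k, Bk k ≠ 0 := fun k => by simp only [hBk]; exact hB1k k
  have hIBk : ∀ k, I * Bk k ≠ 0 := fun k => mul_ne_zero Complex.I_ne_zero (hBkne k)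
  set c : Fin (n+1) → ℂ :=
    fun k => (ak k - Complex.exp (I*(lam k:ℂ)) * gk k) / (I * Bk k) with hc
  have hgk0re : (Complex.exp (I*(lam 0:ℂ)) * gk 0).re = 0 := by
    have h := hy₁'
    rw [inner_smul_left, ← Complex.exp_conj] at h
    simp only [map_neg, map_mul, Complex.conj_I, Complex.conj_ofReal, neg_mul, neg_neg] at h
    simpa only [hgk] using h
  have hB0im : (Bk 0).im = 0 := by
    have h1 : (starRingEnd ℂ) (Bk 0) = Bk 0 := by
      simp only [hBk]
      rw [inner_conj_symm]
      rw [hB (e 0) (e 0)]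
    exact Complex.conj_eq_iff_im.mp h1
  have hc0im : (c 0).im = 0 := by
    have hzre : (ak 0 - Complex.exp (I*(lam 0:ℂ)) * gk 0).re = 0 := by
      rw [Complex.sub_re, hgk0re]
      simp only [hak]
      simpa using hy₀
    have hwre : (I * Bk 0).re = 0 := by
      simp [Complex.mul_re, Complex.I_re, Complex.I_im, hB0im]
    rw [hc]
    simp only []
    rw [Complex.div_im, hzre, hwre]
    simp
  obtain ⟨d, hd⟩ := Tmap_surj μ hμmono hμ0 c
  have hmom : ∀ k, (∫ s in (0:ℝ)..1, Complex.exp ((I*(μ k:ℂ)) * s) * wf μ d s)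
      + (if k = 0 then (((d 0).im : ℝ):ℂ) * I else 0) = c k := by
    intro k
    have h2 := congrFun hd k
    simp only [Tmap, LinearMap.coe_mk, AddHom.coe_mk] at h2
    rw [← moment_bridge μ d k] at h2
    exact h2
  have hI0im : (∫ s in (0:ℝ)..1, Complex.exp ((I*(μ 0:ℂ)) * s) * wf μ d s).im = 0 := by
    have heq : (∫ s in (0:ℝ)..1, Complex.exp ((I*(μ 0:ℂ)) * s) * wf μ d s)
        = (((∫ s in (0:ℝ)..1, (wf μ d s).re : ℝ)) : ℂ) := by
      simp only [hμ0, Complex.ofReal_zero, mul_zero, zero_mul, Complex.exp_zero, one_mul]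
      rw [← intervalIntegral.integral_ofReal]
      exact intervalIntegral.integral_congr fun s _ => wf_real μ d s
    rw [heq, Complex.ofReal_im]
  have him : (d 0).im = 0 := by
    have h3 := congrArg Complex.im (hmom 0)
    simpa [hI0im, hc0im] using h3
  have hM : ∀ k, (∫ s in (0:ℝ)..1, Complex.exp ((I*(μ k:ℂ)) * s) * wf μ d s) = c k := by
    intro k
    have h4 := hmom k
    rcases eq_or_ne k 0 with rfl | hk
    · simpa [him] using h4
    · simpa [hk] using h4
  have hcw : Continuous (wf μ d) := wf_continuous μ d
  refine ⟨d, wf μ d, ?_, wf_im μ d, ?_⟩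
  · intro t
    unfold wf
    refine Finset.sum_congr rfl fun k _ => ?_
    rw [show (I*((μ k:ℝ):ℂ))*(t:ℂ) = I*((lam k:ℂ)-(lam 0:ℂ))*(t:ℂ) by
        simp only [hμdef]; push_cast; ring,
      show (-(I*((μ k:ℝ):ℂ)))*(t:ℂ) = -I*((lam k:ℂ)-(lam 0:ℂ))*(t:ℂ) by
        simp only [hμdef]; push_cast; ring]
  set y : ℝ → EuclideanSpace ℂ (Fin (n+1)) :=
    fun t => ∑ k, ysol (lam k) (lam 0) (ak k) (Bk k) (wf μ d) t • e k with hy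
  have hy0 : y 0 = y₀ := by
    rw [hy]
    simp only [ysol_zero]
    simp only [hak]
    exact hexpand y₀
  refine ⟨y, hy0, ?_, ?_⟩
  · intro t ht
    have hLam : ∀ s : ℝ, Λ (y s)
        = ∑ k, ((lam k:ℂ) * ysol (lam k) (lam 0) (ak k) (Bk k) (wf μ d) s) • e k := by
      intro s
      rw [hy]
      rw [map_sum]
      refine Finset.sum_congr rfl fun k _ => ?_
      rw [LinearMap.map_smul, hev k, smul_smul, mul_comm]
    have hBe0 : B (e 0) = ∑ k, Bk k • e k := by
      simp only [hBk]
      exact (hexpand (B (e 0))).symm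
    have hintegrand : ∀ s : ℝ,
        Λ (y s) + (wf μ d s * Complex.exp (-I * (lam 0:ℂ) * s)) • B (e 0)
        = ∑ k, (((lam k:ℂ) * ysol (lam k) (lam 0) (ak k) (Bk k) (wf μ d) s
            + (wf μ d s * Complex.exp (-I * (lam 0:ℂ) * s)) * Bk k)) • e k := by
      intro s
      rw [hLam s, hBe0, Finset.smul_sum, ← Finset.sum_add_distrib]
      refine Finset.sum_congr rfl fun k _ => ?_
      rw [smul_smul, add_smul]
    have hscont : ∀ k : Fin (n+1), Continuous fun s : ℝ =>
        ((lam k:ℂ) * ysol (lam k) (lam 0) (ak k) (Bk k) (wf μ d) s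
          + (wf μ d s * Complex.exp (-I * (lam 0:ℂ) * s)) * Bk k) :=
      fun k => (continuous_const.mul (ysol_continuous hcw)).add
        ((hcw.mul (by fun_prop)).mul continuous_const)
    have hint : (∫ s in (0:ℝ)..t,
          (Λ (y s) + (wf μ d s * Complex.exp (-I * (lam 0:ℂ) * s)) • B (e 0)))
        = ∑ k, (∫ s in (0:ℝ)..t,
            ((lam k:ℂ) * ysol (lam k) (lam 0) (ak k) (Bk k) (wf μ d) s
              + (wf μ d s * Complex.exp (-I * (lam 0:ℂ) * s)) * Bk k)) • e k := by
      simp_rw [hintegrand]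
      rw [intervalIntegral.integral_finset_sum]
      · exact Finset.sum_congr rfl fun k _ => intervalIntegral.integral_smul_const _ _
      · intro k _
        exact ((hscont k).smul continuous_const).intervalIntegrable _ _
    rw [hint, hy0]
    rw [hy]
    rw [Finset.smul_sum]
    have hy0' : y₀ = ∑ k, ak k • e k := by
      simp only [hak]
      exact (hexpand y₀).symm
    rw [hy0', ← Finset.sum_sub_distrib]
    refine Finset.sum_congr rfl fun k _ => ?_
    rw [smul_smul, ← sub_smul]
    congr 1
    exact ysol_integral_eq hcw t
  · rw [hy]
    have h1 : ∀ k, ysol (lam k) (lam 0) (ak k) (Bk k) (wf μ d) 1 = gk k := by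
      intro k
      unfold ysol
      rw [Complex.ofReal_one, mul_one]
      have hMk : (∫ s in (0:ℝ)..1,
          Complex.exp ((I*((lam k - lam 0 : ℝ):ℂ)) * s) * wf μ d s) = c k := by
        have h5 := hM k
        simp only [hμdef] at h5
        exact h5
      rw [hMk]
      rw [show I * Bk k * c k = ak k - Complex.exp (I*(lam k:ℂ)) * gk k by
        rw [hc]; exact mul_div_cancel₀ _ (hIBk k)]
      rw [sub_sub_cancel, ← mul_assoc, ← Complex.exp_add]
      simp
    simp only [h1]
    simp only [hgk]
    exact hexpand y₁'
end
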